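/- arXiv:1505.04309 — 4 statements merged into one kernel-verified Lean document; each statement's English description precedes it below -/
import Mathlib

section
/- Let k be a natural number, G a finite multigraph, and v a vertex of G such that the degree of v is less than 2k and p_G(x,y) ≥ k for any two distinct neighbors x, y of v. Then v is not a cut-vertex of G. -/
/-- A finite multigraph on `V`: `mult u v` is the number of parallel edges joining
`u` and `v`; there are no loops. -/
structure Multigraph (V : Type) where
  mult : V → V → ℕ
  symm : ∀ u v, mult u v = mult v u
  loopless : ∀ v, mult v v = 0

namespace Multigraph

variable {V : Type}

/-- The degree of a vertex of a multigraph. -/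
def degree [Fintype V] (G : Multigraph V) (v : V) : ℕ := ∑ u, G.mult v u

/-- The number of times the edge `{u, w}` is used by consecutive entries of the
vertex list `l`. -/
def pairCount [DecidableEq V] (l : List V) (u w : V) : ℕ :=
  ((l.zip l.tail).count (u, w)) + ((l.zip l.tail).count (w, u))

/-- `l` is the vertex list of a path from `x` to `y` in `G`. -/
def IsPathList (G : Multigraph V) (x y : V) (l : List V) : Prop :=
  l ≠ [] ∧ l.Nodup ∧ l.head? = some x ∧ l.getLast? = some y ∧
    l.Chain' (fun a b => 1 ≤ G.mult a b)

/-- `G` has (at least) `k` pairwise edge-disjoint paths from `x` to `y`,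
i.e. `p_G(x, y) ≥ k`. -/
def HasEdgeDisjointPaths [Fintype V] [DecidableEq V] (G : Multigraph V)
    (x y : V) (k : ℕ) : Prop :=
  ∃ P : Fin k → List V, (∀ i, G.IsPathList x y (P i)) ∧
    ∀ u w : V, (∑ i, pairCount (P i) u w) ≤ G.mult u w

/-- The underlying simple graph of a multigraph. -/
def toSimpleGraph (G : Multigraph V) : SimpleGraph V where
  Adj u v := 1 ≤ G.mult u v
  symm := ⟨fun u v h => by rwa [G.symm v u]⟩
  loopless := ⟨fun v h => by simp only [G.loopless v] at h; omega⟩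

/-- `v` is a cut-vertex of `G` if deleting `v` increases the number of connected
components. -/
def IsCutVertex [Fintype V] (G : Multigraph V) (v : V) : Prop :=
  Nat.card ((G.toSimpleGraph.induce {u : V | u ≠ v}).ConnectedComponent) >
    Nat.card G.toSimpleGraph.ConnectedComponent

/-- `G'` (a lifting of `G` at `v`) is admissible: for all distinct `x, y ≠ v`,
the maximum number of pairwise edge-disjoint `x`–`y` paths is the same in `G`
and in `G'`. -/
def AdmissibleAt [Fintype V] [DecidableEq V] (G G' : Multigraph V) (v : V) : Prop :=
  ∀ x y : V, x ≠ v → y ≠ v → x ≠ y → ∀ k : ℕ,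
    (G.HasEdgeDisjointPaths x y k ↔ G'.HasEdgeDisjointPaths x y k)


lemma mem_zip_pair {α : Type} (a b : α) :
    ∀ (l₁ l₂ : List α), (a, b) ∈ (l₁ ++ a :: b :: l₂).zip (l₁ ++ a :: b :: l₂).tail
  | [], l₂ => by simp
  | c :: l₁, l₂ => by
    have ih := mem_zip_pair a b l₁ l₂
    obtain ⟨r, rs, hr⟩ : ∃ r rs, l₁ ++ a :: b :: l₂ = r :: rs := by
      cases l₁ <;> exact ⟨_, _, rfl⟩
    simp only [List.cons_append, hr, List.tail_cons, List.zip_cons_cons] at ih ⊢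
    exact List.mem_cons_of_mem _ ih


lemma two_le_sum_pairCount [Fintype V] [DecidableEq V] {l : List V} {x y v : V}
    (hx : l.head? = some x) (hy : l.getLast? = some y) (hvx : v ≠ x) (hvy : v ≠ y)
    (hv : v ∈ l) : 2 ≤ ∑ u, pairCount l v u := by
  obtain ⟨s, t, rfl⟩ := List.append_of_mem hv
  have hs : s ≠ [] := by
    rintro rfl
    simp at hx
    exact hvx hx
  have ht : t ≠ [] := by
    rintro rfl
    rw [show s ++ [v] = s ++ [v] from rfl, List.getLast?_concat] at hy
    exact hvy (Option.some_injective _ hy)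
  obtain ⟨s', a, rfl⟩ := (List.eq_nil_or_concat s).resolve_left hs
  obtain ⟨b, t', rfl⟩ := List.exists_cons_of_ne_nil ht
  simp only [List.concat_eq_append] at hx hy hv ⊢
  have h1 : (a, v) ∈ (s' ++ [a] ++ v :: b :: t').zip (s' ++ [a] ++ v :: b :: t').tail := by
    have := mem_zip_pair a v s' (b :: t')
    simpa using this
  have h2 : (v, b) ∈ (s' ++ [a] ++ v :: b :: t').zip (s' ++ [a] ++ v :: b :: t').tail := by
    have := mem_zip_pair v b (s' ++ [a]) t'
    simpa using this
  set L := s' ++ [a] ++ v :: b :: t' with hL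
  have ha : 1 ≤ pairCount L v a := by
    have := List.count_pos_iff.mpr h1
    unfold pairCount; omega
  have hb : 1 ≤ pairCount L v b := by
    have := List.count_pos_iff.mpr h2
    unfold pairCount; omega
  by_cases hab : a = b
  · subst hab
    have hab2 : 2 ≤ pairCount L v a := by
      have c1 := List.count_pos_iff.mpr h1
      have c2 := List.count_pos_iff.mpr h2
      unfold pairCount; omega
    calc 2 ≤ pairCount L v a := hab2
    _ ≤ ∑ u, pairCount L v u := Finset.single_le_sum (fun _ _ => Nat.zero_le _) (Finset.mem_univ a)
  · have : pairCount L v a + pairCount L v b ≤ ∑ u, pairCount L v u := by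
      have := Finset.sum_le_sum_of_subset (Finset.subset_univ {a, b})
        (f := fun u => pairCount L v u)
      rwa [Finset.sum_pair hab] at this
    omega


lemma exists_pathList_avoid [Fintype V] [DecidableEq V] {G : Multigraph V} {v x y : V} {k : ℕ}
    (hdeg : G.degree v < 2 * k) (h : G.HasEdgeDisjointPaths x y k)
    (hvx : v ≠ x) (hvy : v ≠ y) :
    ∃ l, G.IsPathList x y l ∧ v ∉ l := by
  obtain ⟨P, hP, hbound⟩ := h
  by_contra hc
  push_neg at hc
  have hall : ∀ i, v ∈ P i := fun i => hc _ (hP i)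
  have h2 : ∀ i : Fin k, 2 ≤ ∑ u, pairCount (P i) v u := fun i =>
    two_le_sum_pairCount (hP i).2.2.1 (hP i).2.2.2.1 hvx hvy (hall i)
  have hsum : 2 * k ≤ ∑ i : Fin k, ∑ u, pairCount (P i) v u := by
    calc 2 * k = ∑ _i : Fin k, 2 := by simp [mul_comm]
    _ ≤ _ := Finset.sum_le_sum (fun i _ => h2 i)
  rw [Finset.sum_comm] at hsum
  have hle : ∑ u, ∑ i : Fin k, pairCount (P i) v u ≤ G.degree v :=
    Finset.sum_le_sum (fun u _ => hbound v u)
  omega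


lemma reach_of_list {G : Multigraph V} {v : V} :
    ∀ (l : List V) (x y : V) (hx : x ≠ v) (hy : y ≠ v),
    l.head? = some x → l.getLast? = some y →
    l.Chain' (fun a b => 1 ≤ G.mult a b) → v ∉ l →
    (G.toSimpleGraph.induce {u | u ≠ v}).Reachable ⟨x, hx⟩ ⟨y, hy⟩
  | [], x, y, hx, hy, h1, h2, h3, h4 => by simp at h1
  | [a], x, y, hx, hy, h1, h2, h3, h4 => by
    simp at h1 h2
    subst h1; subst h2
    rfl
  | a :: b :: l, x, y, hx, hy, h1, h2, h3, h4 => by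
    simp only [List.head?_cons, Option.some.injEq] at h1
    subst h1
    have hbv : b ≠ v := by simp at h4; tauto
    have hadj : (G.toSimpleGraph.induce {u | u ≠ v}).Adj ⟨a, hx⟩ ⟨b, hbv⟩ := by
      exact h3.rel_head
    refine hadj.reachable.trans ?_
    exact reach_of_list (b :: l) b y hbv hy rfl (by simpa using h2) h3.tail
      (by simp at h4 ⊢; tauto)


lemma walk_reach {G : Multigraph V} {v : V}
    (hA : ∀ x y : V, (hx : x ≠ v) → (hy : y ≠ v) → 1 ≤ G.mult v x → 1 ≤ G.mult v y →
      (G.toSimpleGraph.induce {u | u ≠ v}).Reachable ⟨x, hx⟩ ⟨y, hy⟩) :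
    ∀ (n : ℕ) (x y : V) (p : G.toSimpleGraph.Walk x y), p.length ≤ n →
      ∀ (hx : x ≠ v) (hy : y ≠ v),
      (G.toSimpleGraph.induce {u | u ≠ v}).Reachable ⟨x, hx⟩ ⟨y, hy⟩ := by
  intro n
  induction n with
  | zero =>
    intro x y p hp hx hy
    cases p with
    | nil => rfl
    | cons h q => simp [SimpleGraph.Walk.length_cons] at hp
  | succ n ih =>
    intro x y p hp hx hy
    cases p with
    | nil => rfl
    | cons h q =>
      rename_i w
      by_cases hw : w = v
      · cases q with
        | nil => exact absurd hw hy
        | cons h' q' =>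
          rename_i w'
          rw [hw] at h h'
          have hw' : w' ≠ v := h'.ne'
          have hx1 : 1 ≤ G.mult v x := by rw [G.symm]; exact h
          refine (hA x w' hx hw' hx1 h').trans (ih w' y q' ?_ hw' hy)
          simp [SimpleGraph.Walk.length_cons] at hp
          omega
      · have hadj : (G.toSimpleGraph.induce {u | u ≠ v}).Adj ⟨x, hx⟩ ⟨w, hw⟩ := h
        refine hadj.reachable.trans (ih w y q ?_ hw hy)
        simp [SimpleGraph.Walk.length_cons] at hp
        omega


end Multigraph

/-- If `v` is a vertex of a finite multigraph `G` with degree less than `2k` such that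
there are at least `k` pairwise edge-disjoint paths between any two distinct
neighbours of `v`, then `v` is not a cut-vertex of `G`. -/
theorem not_cutVertex_of_small_degree {V : Type} [Fintype V] [DecidableEq V]
    (k : ℕ) (G : Multigraph V) (v : V)
    (hdeg : G.degree v < 2 * k)
    (hpaths : ∀ x y : V, x ≠ y → 1 ≤ G.mult v x → 1 ≤ G.mult v y →
      G.HasEdgeDisjointPaths x y k) :
    ¬ G.IsCutVertex v := by
  intro hcut
  have hA : ∀ x y : V, (hx : x ≠ v) → (hy : y ≠ v) → 1 ≤ G.mult v x → 1 ≤ G.mult v y →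
      (G.toSimpleGraph.induce {u | u ≠ v}).Reachable ⟨x, hx⟩ ⟨y, hy⟩ := by
    intro x y hx hy h1 h2
    by_cases hxy : x = y
    · subst hxy; rfl
    · obtain ⟨l, hl, hvl⟩ := Multigraph.exists_pathList_avoid hdeg (hpaths x y hxy h1 h2)
        (Ne.symm hx) (Ne.symm hy)
      exact Multigraph.reach_of_list l x y hx hy hl.2.2.1 hl.2.2.2.1 hl.2.2.2.2 hvl
  have key : ∀ (a b : {u : V | u ≠ v}), G.toSimpleGraph.Reachable a.1 b.1 →
      (G.toSimpleGraph.induce {u : V | u ≠ v}).Reachable a b := by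
    intro a b h
    obtain ⟨p⟩ := h
    exact Multigraph.walk_reach hA p.length a.1 b.1 p le_rfl a.2 b.2
  let φ : (G.toSimpleGraph.induce {u : V | u ≠ v}) →g G.toSimpleGraph :=
    ⟨Subtype.val, fun h => h⟩
  have finj : Function.Injective (SimpleGraph.ConnectedComponent.map φ) := by
    intro C D
    refine SimpleGraph.ConnectedComponent.ind₂ ?_ C D
    intro a b h
    rw [SimpleGraph.ConnectedComponent.map_mk, SimpleGraph.ConnectedComponent.map_mk] at h
    have hr : G.toSimpleGraph.Reachable a.1 b.1 := SimpleGraph.ConnectedComponent.exact h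
    exact SimpleGraph.ConnectedComponent.sound (key a b hr)
  have hle := Nat.card_le_card_of_injective _ finj
  unfold Multigraph.IsCutVertex at hcut
  omega
end

section
/- Let k be a natural number. If G is a 2k-edge-connected finite graph, then G contains k pairwise edge-disjoint spanning trees. -/
open SimpleGraph
namespace TP
variable {V : Type}

/-- Restriction of a graph to a vertex set, as a graph on the same vertex type. -/
def restrict (S : Set V) (H : SimpleGraph V) : SimpleGraph V where
  Adj u v := H.Adj u v ∧ u ∈ S ∧ v ∈ S
  symm := ⟨fun u v h => ⟨h.1.symm, h.2.2, h.2.1⟩⟩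
  loopless := ⟨fun v h => H.loopless.irrefl v h.1⟩

lemma restrict_le (S : Set V) (H : SimpleGraph V) : restrict S H ≤ H := fun _ _ h => h.1

lemma restrict_mono_set {S T : Set V} (h : S ⊆ T) (H : SimpleGraph V) :
    restrict S H ≤ restrict T H := fun _ _ hu => ⟨hu.1, h hu.2.1, h hu.2.2⟩

lemma restrict_mono {S : Set V} {H K : SimpleGraph V} (h : H ≤ K) :
    restrict S H ≤ restrict S K := fun _ _ hu => ⟨h hu.1, hu.2⟩

lemma restrict_univ (H : SimpleGraph V) : restrict Set.univ H = H := by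
  ext u v; simp [restrict]

/-- L9: reachability in `H ⊔ {xy}` decomposes. -/
lemma reachable_sup_edge {H : SimpleGraph V} {x y u v : V}
    (h : (H ⊔ fromEdgeSet {s(x,y)}).Reachable u v) :
    H.Reachable u v ∨ (H.Reachable u x ∧ H.Reachable y v) ∨
      (H.Reachable u y ∧ H.Reachable x v) := by
  obtain ⟨W⟩ := h
  induction W with
  | nil => exact Or.inl (Reachable.refl _)
  | @cons u z v hadj W ih =>
    have hcase : H.Adj u z ∨ s(u,z) = s(x,y) := by
      rcases hadj with h' | h'
      · exact Or.inl h'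
      · simp only [fromEdgeSet_adj, Set.mem_singleton_iff] at h'
        exact Or.inr h'.1
    rcases hcase with h' | h'
    · rcases ih with h2 | ⟨h2,h3⟩ | ⟨h2,h3⟩
      · exact Or.inl (h'.reachable.trans h2)
      · exact Or.inr (Or.inl ⟨h'.reachable.trans h2, h3⟩)
      · exact Or.inr (Or.inr ⟨h'.reachable.trans h2, h3⟩)
    · rw [Sym2.eq_iff] at h'
      rcases h' with ⟨hux, hzy⟩ | ⟨huy, hzx⟩
      · subst hux; subst hzy
        rcases ih with h2 | ⟨h2,h3⟩ | ⟨h2,h3⟩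
        · exact Or.inr (Or.inl ⟨Reachable.refl _, h2⟩)
        · exact Or.inr (Or.inl ⟨Reachable.refl _, h3⟩)
        · exact Or.inl h3
      · subst huy; subst hzx
        rcases ih with h2 | ⟨h2,h3⟩ | ⟨h2,h3⟩
        · exact Or.inr (Or.inr ⟨Reachable.refl _, h2⟩)
        · exact Or.inl h3
        · exact Or.inr (Or.inr ⟨Reachable.refl _, h3⟩)

lemma le_deleteEdges_sup_edge (H : SimpleGraph V) (a b : V) :
    H ≤ H.deleteEdges {s(a,b)} ⊔ fromEdgeSet {s(a,b)} := by
  intro u v huv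
  by_cases he : s(u,v) = s(a,b)
  · exact Or.inr (by simp [he, huv.ne])
  · exact Or.inl (by simp [huv, he])

/-- L8 generalized: deleting one edge, reachability decomposes. -/
lemma reachable_delete_edge_cases {H : SimpleGraph V} {a b u v : V}
    (h : H.Reachable u v) :
    (H.deleteEdges {s(a,b)}).Reachable u v ∨
      ((H.deleteEdges {s(a,b)}).Reachable u a ∧ (H.deleteEdges {s(a,b)}).Reachable b v) ∨
      ((H.deleteEdges {s(a,b)}).Reachable u b ∧ (H.deleteEdges {s(a,b)}).Reachable a v) :=
  reachable_sup_edge (h.mono (le_deleteEdges_sup_edge H a b))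

/-- L6': if all edges of a walk except possibly `s(a,b)` are in `K`, and `a b` are
`K`-reachable, then endpoints of the walk are `K`-reachable. -/
lemma reachable_of_walk_detour {H K : SimpleGraph V} {a b u v : V}
    (W : H.Walk u v) (hE : ∀ e ∈ W.edges, e ≠ s(a,b) → e ∈ K.edgeSet)
    (hab : K.Reachable a b) : K.Reachable u v := by
  induction W with
  | nil => exact Reachable.refl _
  | @cons u z _ hadj W ih =>
    have ih' := ih (fun e he => hE e (by simp [he]))
    refine Reachable.trans ?_ ih'
    by_cases he : s(u,z) = s(a,b)
    · rw [Sym2.eq_iff] at he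
      rcases he with ⟨rfl, rfl⟩ | ⟨rfl, rfl⟩
      · exact hab
      · exact hab.symm
    · exact Adj.reachable (by
        have := hE s(u,z) (by simp) he
        simpa using this)

lemma isAcyclic_mono {H K : SimpleGraph V} (h : H ≤ K) (hK : K.IsAcyclic) : H.IsAcyclic :=
  fun _ c hc => hK (c.mapLe h) (hc.mapLe h)

/-- L1: adding an edge between non-reachable vertices preserves acyclicity. -/
lemma isAcyclic_sup_edge {H : SimpleGraph V} {x y : V} (hH : H.IsAcyclic) (hxy : x ≠ y)
    (hr : ¬H.Reachable x y) : (H ⊔ fromEdgeSet {s(x,y)}).IsAcyclic := by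
  rw [isAcyclic_iff_forall_edge_isBridge]
  intro e he
  rw [edgeSet_sup, edgeSet_fromEdgeSet] at he
  have hxyH : s(x,y) ∉ H.edgeSet := fun h => hr (Adj.reachable h)
  rcases he with he | he
  · -- e is an edge of H; it is a bridge there
    induction e using Sym2.ind with
    | _ a b =>
      have hbr : H.IsBridge s(a,b) := (isAcyclic_iff_forall_edge_isBridge.mp hH) he
      have hab : H.Adj a b := he
      rw [isBridge_iff] at hbr ⊢
      · intro hre
        have hle : (H ⊔ fromEdgeSet {s(x,y)}) \ fromEdgeSet {s(a,b)} ≤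
            (H \ fromEdgeSet {s(a,b)}) ⊔ fromEdgeSet {s(x,y)} := by
          intro u v hu
          rcases hu.1 with h1 | h1
          · exact Or.inl ⟨h1, hu.2⟩
          · exact Or.inr h1
        have hdec := reachable_sup_edge (Reachable.mono hle hre)
        have hHab : ¬(H \ fromEdgeSet {s(a,b)}).Reachable a b := hbr
        have hmle : (H \ fromEdgeSet {s(a,b)}) ≤ H := sdiff_le
        rcases hdec with h2 | ⟨h2,h3⟩ | ⟨h2,h3⟩
        · exact hHab h2
        · -- a ~ x, y ~ b in H\ab ⇒ x ~ y in H
          exact hr (((h2.mono hmle).symm.trans hab.reachable).trans (h3.mono hmle).symm)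
        · exact hr ((h3.mono hmle).trans (hab.reachable.symm.trans (h2.mono hmle)))
  · -- e = s(x,y)
    simp only [Set.mem_diff, Set.mem_singleton_iff] at he
    obtain ⟨rfl, -⟩ := he
    rw [isBridge_iff]
    intro hre
    have hle : (H ⊔ fromEdgeSet {s(x,y)}) \ fromEdgeSet {s(x,y)} ≤ H := by
      intro u v hu
      rcases hu.1 with h1 | h1
      · exact h1
      · exact absurd h1 hu.2
    exact hr (Reachable.mono hle hre)

lemma reachable_transfer {H K : SimpleGraph V} {u v : V} (W : H.Walk u v)
    (h : ∀ e ∈ W.edges, e ∈ K.edgeSet) : K.Reachable u v := ⟨W.transfer K h⟩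

/-- Cutting an edge of a path in an acyclic graph disconnects the ends. -/
lemma not_reachable_delete_of_mem_path_edges [DecidableEq V] {H : SimpleGraph V}
    (hH : H.IsAcyclic)
    {x y : V} {p : H.Walk x y} (hp : p.IsPath) {f : Sym2 V} (hf : f ∈ p.edges) :
    ¬(H.deleteEdges {f}).Reachable x y := by
  rintro ⟨W⟩
  have hle : H.deleteEdges {f} ≤ H := deleteEdges_le _
  set q := W.toPath with hqdef
  have hq : (q : (H.deleteEdges {f}).Walk x y).IsPath := q.2
  have hq' : ((q : (H.deleteEdges {f}).Walk x y).mapLe hle).IsPath := hq.mapLe hle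
  have hpq := hH.path_unique ⟨p, hp⟩ ⟨(q : (H.deleteEdges {f}).Walk x y).mapLe hle, hq'⟩
  have hval : p = (q : (H.deleteEdges {f}).Walk x y).mapLe hle := congrArg Subtype.val hpq
  have hedges : ((q : (H.deleteEdges {f}).Walk x y).mapLe hle).edges
      = (q : (H.deleteEdges {f}).Walk x y).edges := by
    rw [Walk.mapLe, Walk.edges_map]
    have h1 : Sym2.map ⇑(Hom.ofLE hle) = id := by
      ext e
      induction e using Sym2.ind with
      | _ a b => simp [Hom.ofLE_apply]
    rw [h1, List.map_id]
  rw [hval, hedges] at hf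
  have hmem := Walk.edges_subset_edgeSet _ hf
  rw [deleteEdges, edgeSet_sdiff, edgeSet_fromEdgeSet] at hmem
  rcases hmem with ⟨h1, h2⟩
  have hd : f.IsDiag := by
    by_contra hd
    exact h2 ⟨rfl, hd⟩
  exact H.not_isDiag_of_mem_edgeSet h1 hd

/-- Conversely, if deleting `f` disconnects ends, then `f` is on every walk. -/
lemma mem_edges_of_not_reachable {H : SimpleGraph V} {x y : V} {p : H.Walk x y}
    {f : Sym2 V} (hr : ¬(H.deleteEdges {f}).Reachable x y) : f ∈ p.edges := by
  by_contra hf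
  refine hr (reachable_transfer p (fun e he => ?_))
  rw [deleteEdges, edgeSet_sdiff, edgeSet_fromEdgeSet]
  refine ⟨p.edges_subset_edgeSet he, ?_⟩
  simp only [Set.mem_diff, Set.mem_singleton_iff, not_and, not_not]
  intro hc
  exact absurd (hc ▸ he) hf


section Max
variable [Fintype V] {k : ℕ}

def Good (G : SimpleGraph V) (F : Fin k → SimpleGraph V) : Prop :=
  (∀ i, F i ≤ G ∧ (F i).IsAcyclic) ∧
  (∀ i j, i ≠ j → Disjoint (F i).edgeSet (F j).edgeSet)

noncomputable def wt (F : Fin k → SimpleGraph V) : ℕ := ∑ i, (F i).edgeSet.ncard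

def IsMax (G : SimpleGraph V) (F : Fin k → SimpleGraph V) : Prop :=
  Good G F ∧ ∀ F' : Fin k → SimpleGraph V, Good G F' → wt F' ≤ wt F

lemma exists_max (G : SimpleGraph V) : ∃ F : Fin k → SimpleGraph V, IsMax G F := by
  have hgood : Good G (fun _ : Fin k => (⊥ : SimpleGraph V)) :=
    ⟨fun _ => ⟨bot_le, isAcyclic_bot⟩, fun i j _ => by simp⟩
  haveI : Nonempty {F : Fin k → SimpleGraph V // Good G F} := ⟨⟨_, hgood⟩⟩
  obtain ⟨⟨F, hF⟩, hmax⟩ := Finite.exists_max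
    (fun F : {F : Fin k → SimpleGraph V // Good G F} => wt F.1)
  exact ⟨F, hF, fun F' h' => hmax ⟨F', h'⟩⟩

lemma fromEdgeSet_single_le {G : SimpleGraph V} {x y : V} (h : G.Adj x y) :
    fromEdgeSet {s(x,y)} ≤ G := by
  intro u v hu
  simp only [fromEdgeSet_adj, Set.mem_singleton_iff] at hu
  rcases Sym2.eq_iff.mp hu.1 with ⟨rfl, rfl⟩ | ⟨rfl, rfl⟩
  · exact h
  · exact h.symm

lemma edgeSet_sup_edge {H : SimpleGraph V} {x y : V} (hxy : x ≠ y) :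
    (H ⊔ fromEdgeSet {s(x,y)}).edgeSet = H.edgeSet ∪ {s(x,y)} := by
  rw [edgeSet_sup, edgeSet_fromEdgeSet]
  congr 1
  ext e
  simp only [Set.mem_diff, Set.mem_singleton_iff, Set.mem_setOf_eq]
  constructor
  · rintro ⟨rfl, -⟩; rfl
  · rintro rfl; exact ⟨rfl, by simp [hxy]⟩

lemma edgeSet_del_edge {H : SimpleGraph V} (f : Sym2 V) :
    (H.deleteEdges {f}).edgeSet = H.edgeSet \ {f} := by
  rw [deleteEdges, edgeSet_sdiff, edgeSet_fromEdgeSet]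
  ext e
  simp only [Set.mem_diff, Set.mem_singleton_iff, Set.mem_setOf_eq]
  constructor
  · rintro ⟨he, h2⟩
    exact ⟨he, fun hef => h2 ⟨hef, fun hd => H.not_isDiag_of_mem_edgeSet (hef ▸ he) hd⟩⟩
  · rintro ⟨he, h2⟩
    exact ⟨he, fun hc => h2 hc.1⟩

lemma sum_update_ncard (F : Fin k → SimpleGraph V) (i : Fin k) (N : SimpleGraph V) :
    ∑ j, ((Function.update F i N) j).edgeSet.ncard
      = ∑ j, (F j).edgeSet.ncard + N.edgeSet.ncard - (F i).edgeSet.ncard := by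
  have h1 : (fun j => ((Function.update F i N) j).edgeSet.ncard)
      = Function.update (fun j => (F j).edgeSet.ncard) i (N.edgeSet.ncard) := by
    funext j
    exact Function.apply_update (fun _ H => SimpleGraph.edgeSet H |>.ncard) F i N j
  rw [h1, Finset.sum_update_of_mem (Finset.mem_univ i),
    Finset.sum_eq_sum_sdiff_singleton_add (Finset.mem_univ i)
      (fun j => (F j).edgeSet.ncard)]
  omega

/-- C1: in a maximal forest tuple, ends of a free `G`-edge are reachable in every forest. -/
lemma ends_reachable {G : SimpleGraph V} {F : Fin k → SimpleGraph V} (hmax : IsMax G F)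
    {x y : V} (hG : G.Adj x y) (hfree : ∀ i, s(x,y) ∉ (F i).edgeSet) (i : Fin k) :
    (F i).Reachable x y := by
  obtain ⟨⟨hLA, hdisj⟩, hopt⟩ := hmax
  by_contra hr
  set N := (F i) ⊔ fromEdgeSet {s(x,y)} with hN
  have hEN : N.edgeSet = (F i).edgeSet ∪ {s(x,y)} := edgeSet_sup_edge hG.ne
  have hgood : Good G (Function.update F i N) := by
    constructor
    · intro j
      rcases eq_or_ne j i with rfl | hj
      · rw [Function.update_self]
        exact ⟨sup_le (hLA j).1 (fromEdgeSet_single_le hG),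
          isAcyclic_sup_edge (hLA j).2 hG.ne hr⟩
      · rw [Function.update_of_ne hj]
        exact hLA j
    · intro a b hab
      rcases eq_or_ne a i with rfl | ha
      · rw [Function.update_self, Function.update_of_ne hab.symm, hEN]
        exact Set.disjoint_union_left.mpr ⟨hdisj a b hab,
          Set.disjoint_singleton_left.mpr (hfree b)⟩
      · rw [Function.update_of_ne ha]
        rcases eq_or_ne b i with rfl | hb
        · rw [Function.update_self, hEN]
          exact Set.disjoint_union_right.mpr ⟨hdisj a b hab,
            Set.disjoint_singleton_right.mpr (hfree a)⟩
        · rw [Function.update_of_ne hb]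
          exact hdisj a b hab
  have hNcard : N.edgeSet.ncard = (F i).edgeSet.ncard + 1 := by
    rw [hEN, Set.union_singleton, Set.ncard_insert_of_notMem (hfree i)
      ((F i).edgeSet.toFinite)]
  have hle : (F i).edgeSet.ncard ≤ ∑ j, (F j).edgeSet.ncard :=
    Finset.single_le_sum (f := fun j => (F j).edgeSet.ncard) (fun j _ => Nat.zero_le _) (Finset.mem_univ i)
  have hwt : wt (Function.update F i N) = wt F + 1 := by
    rw [wt, wt, sum_update_ncard, hNcard]
    omega
  have := hopt _ hgood
  omega

/-- The tuple obtained by an exchange. -/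
noncomputable def xchg (F : Fin k → SimpleGraph V) (i : Fin k) (x y : V) (f : Sym2 V) :
    Fin k → SimpleGraph V :=
  Function.update F i (((F i).deleteEdges {f}) ⊔ fromEdgeSet {s(x,y)})

/-- States reachable from `(F₀, e₀)` by exchanges. -/
inductive Reach (F₀ : Fin k → SimpleGraph V) (e₀ : Sym2 V) :
    (Fin k → SimpleGraph V) → Sym2 V → Prop
  | base : Reach F₀ e₀ F₀ e₀
  | step {F : Fin k → SimpleGraph V} {x y : V} (i : Fin k) (f : Sym2 V)
      (hR : Reach F₀ e₀ F s(x,y))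
      (hf : f ∈ (F i).edgeSet)
      (hcut : ¬((F i).deleteEdges {f}).Reachable x y) :
      Reach F₀ e₀ (xchg F i x y f) f

def StInv (G : SimpleGraph V) (F : Fin k → SimpleGraph V) (e : Sym2 V) : Prop :=
  IsMax G F ∧ e ∈ G.edgeSet ∧ ∀ i, e ∉ (F i).edgeSet

lemma stinv_step {G : SimpleGraph V} {F : Fin k → SimpleGraph V} {x y : V}
    (hInv : StInv G F s(x,y)) (i : Fin k) (f : Sym2 V)
    (hf : f ∈ (F i).edgeSet)
    (hcut : ¬((F i).deleteEdges {f}).Reachable x y) :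
    StInv G (xchg F i x y f) f := by
  obtain ⟨⟨⟨hLA, hdisj⟩, hopt⟩, hxyG, hfree⟩ := hInv
  have hxy : x ≠ y := (G.mem_edgeSet.mp hxyG).ne
  have hfne : f ≠ s(x,y) := fun h => hfree i (h ▸ hf)
  set D := (F i).deleteEdges {f} with hD
  set N := D ⊔ fromEdgeSet {s(x,y)} with hN
  have hEN : N.edgeSet = ((F i).edgeSet \ {f}) ∪ {s(x,y)} := by
    rw [hN, edgeSet_sup_edge hxy, hD, edgeSet_del_edge]
  have hxchg : ∀ j, xchg F i x y f j = Function.update F i N j := fun j => rfl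
  have hgood : Good G (xchg F i x y f) := by
    constructor
    · intro j
      rcases eq_or_ne j i with rfl | hj
      · rw [hxchg, Function.update_self]
        refine ⟨sup_le (le_trans (deleteEdges_le _) (hLA j).1)
          (fromEdgeSet_single_le (G.mem_edgeSet.mp hxyG)), ?_⟩
        exact isAcyclic_sup_edge (isAcyclic_mono (deleteEdges_le _) (hLA j).2) hxy hcut
      · rw [hxchg, Function.update_of_ne hj]
        exact hLA j
    · intro a b hab
      rcases eq_or_ne a i with rfl | ha
      · rw [hxchg, Function.update_self, hxchg, Function.update_of_ne hab.symm, hEN]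
        exact Set.disjoint_union_left.mpr
          ⟨Set.disjoint_of_subset_left Set.diff_subset (hdisj a b hab),
            Set.disjoint_singleton_left.mpr (hfree b)⟩
      · rw [hxchg, Function.update_of_ne ha]
        rcases eq_or_ne b i with rfl | hb
        · rw [hxchg, Function.update_self, hEN]
          exact Set.disjoint_union_right.mpr
            ⟨Set.disjoint_of_subset_right Set.diff_subset (hdisj a b hab),
              Set.disjoint_singleton_right.mpr (hfree a)⟩
        · rw [hxchg, Function.update_of_ne hb]
          exact hdisj a b hab
  have hNcard : N.edgeSet.ncard = (F i).edgeSet.ncard := by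
    rw [hEN, Set.union_singleton,
      Set.ncard_insert_of_notMem (by simp [hfree i]) (Set.toFinite _),
      Set.ncard_diff_singleton_add_one hf (Set.toFinite _)]
  have hwt : wt (xchg F i x y f) = wt F := by
    have : xchg F i x y f = Function.update F i N := rfl
    rw [wt, wt, this, sum_update_ncard, hNcard]
    have hle : (F i).edgeSet.ncard ≤ ∑ j, (F j).edgeSet.ncard :=
      Finset.single_le_sum (f := fun j => (F j).edgeSet.ncard) (fun j _ => Nat.zero_le _) (Finset.mem_univ i)
    omega
  refine ⟨⟨hgood, fun F' h' => hwt ▸ hopt F' h'⟩, ?_, ?_⟩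
  · exact edgeSet_mono (hLA i).1 hf
  · intro j
    rcases eq_or_ne j i with rfl | hj
    · rw [hxchg, Function.update_self, hEN]
      simp [hfne]
    · rw [hxchg, Function.update_of_ne hj]
      exact fun hc => (hdisj i j (Ne.symm hj)).ne_of_mem hf hc rfl

lemma reach_inv {G : SimpleGraph V} {F₀ : Fin k → SimpleGraph V} {e₀ : Sym2 V}
    (h₀ : StInv G F₀ e₀) {F : Fin k → SimpleGraph V} {e : Sym2 V}
    (hR : Reach F₀ e₀ F e) : StInv G F e := by
  induction hR with
  | base => exact h₀
  | step i f hR hf hcut ih => exact stinv_step ih i f hf hcut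

end Max

section Exchange
variable [Fintype V] [DecidableEq V] {k : ℕ}

/-- The set of free edges of reachable states. -/
def RSet (F₀ : Fin k → SimpleGraph V) (e₀ : Sym2 V) : Set (Sym2 V) :=
  {e | ∃ F, Reach F₀ e₀ F e}

/-- The set of vertices covered by `RSet`. -/
def USet (F₀ : Fin k → SimpleGraph V) (e₀ : Sym2 V) : Set V :=
  {v | ∃ e ∈ RSet F₀ e₀, v ∈ e}

lemma mem_edgeSet_restrict {S : Set V} {H : SimpleGraph V} {a b : V} :
    (restrict S H).Adj a b ↔ H.Adj a b ∧ a ∈ S ∧ b ∈ S := Iff.rfl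

/-- every vertex of a walk is an end or lies on one of its edges -/
lemma walk_support_mem_edges {H : SimpleGraph V} {u v : V} (W : H.Walk u v) :
    ∀ t ∈ W.support, t = v ∨ ∃ g ∈ W.edges, t ∈ g := by
  induction W with
  | nil => intro t ht; simp at ht; exact Or.inl ht
  | @cons a b c hadj W ih =>
    intro t ht
    rw [Walk.support_cons, List.mem_cons] at ht
    rcases ht with rfl | ht
    · exact Or.inr ⟨s(t,b), by simp, by simp⟩
    · rcases ih t ht with h | ⟨g, hg, hgt⟩
      · exact Or.inl h
      · exact Or.inr ⟨g, by simp [hg], hgt⟩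

/-- C2: from any reachable state, there is a walk between the ends of the free edge inside
`restrict USet (F i)` whose edges all belong to `RSet`, containing every cut edge. -/
lemma reach_walk {G : SimpleGraph V} {F₀ : Fin k → SimpleGraph V} {e₀ : Sym2 V}
    (h₀ : StInv G F₀ e₀) {F : Fin k → SimpleGraph V} {x y : V}
    (hR : Reach F₀ e₀ F s(x,y)) (i : Fin k) :
    ∃ W : (restrict (USet F₀ e₀) (F i)).Walk x y,
      (∀ g ∈ W.edges, g ∈ RSet F₀ e₀) ∧
      (∀ f, f ∈ (F i).edgeSet → ¬((F i).deleteEdges {f}).Reachable x y → f ∈ W.edges) := by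
  obtain ⟨hmax, hxyG, hfree⟩ := reach_inv h₀ hR
  have hGadj : G.Adj x y := G.mem_edgeSet.mp hxyG
  obtain ⟨W0⟩ := ends_reachable hmax hGadj hfree i
  set p := W0.toPath with hp
  have hpath : (p : (F i).Walk x y).IsPath := p.2
  -- every edge of p is in RSet
  have hedges : ∀ g ∈ (p : (F i).Walk x y).edges, g ∈ RSet F₀ e₀ := by
    intro g hg
    have hgE : g ∈ (F i).edgeSet := Walk.edges_subset_edgeSet _ hg
    have hcut : ¬((F i).deleteEdges {g}).Reachable x y :=
      not_reachable_delete_of_mem_path_edges (hmax.1.1 i).2 hpath hg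
    exact ⟨_, Reach.step i g hR hgE hcut⟩
  -- x and y are in USet
  have hxyR : s(x,y) ∈ RSet F₀ e₀ := ⟨F, hR⟩
  have hxU : x ∈ USet F₀ e₀ := ⟨s(x,y), hxyR, by simp⟩
  have hyU : y ∈ USet F₀ e₀ := ⟨s(x,y), hxyR, by simp⟩
  -- all support vertices are in USet
  have hsup : ∀ t ∈ (p : (F i).Walk x y).support, t ∈ USet F₀ e₀ := by
    intro t ht
    rcases walk_support_mem_edges _ t ht with rfl | ⟨g, hg, hgt⟩
    · exact hyU
    · exact ⟨g, hedges g hg, hgt⟩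
  -- transfer to the restricted graph
  have htrans : ∀ g ∈ (p : (F i).Walk x y).edges,
      g ∈ (restrict (USet F₀ e₀) (F i)).edgeSet := by
    intro g hg
    induction g using Sym2.ind with
    | _ a b =>
      have ha := Walk.fst_mem_support_of_mem_edges _ hg
      have hb := Walk.snd_mem_support_of_mem_edges _ hg
      exact mem_edgeSet_restrict.mpr ⟨Walk.edges_subset_edgeSet _ hg, hsup a ha, hsup b hb⟩
  refine ⟨(p : (F i).Walk x y).transfer _ htrans, ?_, ?_⟩
  · intro g hg
    rw [Walk.edges_transfer] at hg
    exact hedges g hg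
  · intro f hfE hcut
    rw [Walk.edges_transfer]
    exact mem_edges_of_not_reachable (p := (p : (F i).Walk x y)) hcut

lemma rset_ends_reachable {F₀ : Fin k → SimpleGraph V} {e₀ : Sym2 V} {e : Sym2 V}
    (he : e ∈ RSet F₀ e₀) (hd : ¬ e.IsDiag) :
    ∀ v ∈ e, ∀ w ∈ e, (fromEdgeSet (RSet F₀ e₀)).Reachable v w := by
  induction e using Sym2.ind with
  | _ a b =>
    intro v hv w hw
    have hab : a ≠ b := by simpa using hd
    have hadj : (fromEdgeSet (RSet F₀ e₀)).Adj a b := (fromEdgeSet_adj _).mpr ⟨he, hab⟩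
    rw [Sym2.mem_iff] at hv hw
    rcases hv with rfl | rfl <;> rcases hw with rfl | rfl
    · exact Reachable.refl _
    · exact hadj.reachable
    · exact hadj.symm.reachable
    · exact Reachable.refl _

/-- C3: everything in `USet` is connected to the ends of `e₀` through the graph on `RSet`. -/
lemma rg_conn {G : SimpleGraph V} {F₀ : Fin k → SimpleGraph V} {e₀ : Sym2 V}
    (h₀ : StInv G F₀ e₀) {F : Fin k → SimpleGraph V} {e : Sym2 V}
    (hR : Reach F₀ e₀ F e) :
    ∀ v ∈ e, ∀ w ∈ e₀, (fromEdgeSet (RSet F₀ e₀)).Reachable v w := by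
  induction hR with
  | base =>
    intro v hv w hw
    exact rset_ends_reachable ⟨F₀, Reach.base⟩
      (G.not_isDiag_of_mem_edgeSet h₀.2.1) v hv w hw
  | @step F x y i f hR' hf hcut ih =>
    intro v hv w hw
    -- v is on f; f is an edge of the C2-walk for the state (F, s(x,y))
    obtain ⟨W, hWR, hWcut⟩ := reach_walk h₀ hR' i
    have hfW : f ∈ W.edges := hWcut f hf hcut
    have hvsup : v ∈ W.support := by
      induction f using Sym2.ind with
      | _ a b =>
        rw [Sym2.mem_iff] at hv
        rcases hv with rfl | rfl
        · exact Walk.fst_mem_support_of_mem_edges _ hfW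
        · exact Walk.snd_mem_support_of_mem_edges _ hfW
    -- walk from x to v in RG
    have hxv : (fromEdgeSet (RSet F₀ e₀)).Reachable x v := by
      refine reachable_transfer (W.takeUntil v hvsup) ?_
      intro g hg
      have hgW : g ∈ W.edges := Walk.edges_takeUntil_subset _ _ hg
      have hgR : g ∈ RSet F₀ e₀ := hWR g hgW
      rw [edgeSet_fromEdgeSet]
      exact ⟨hgR, fun hd =>
        (restrict (USet F₀ e₀) (F i)).not_isDiag_of_mem_edgeSet
          (Walk.edges_subset_edgeSet _ hgW) hd⟩
    exact hxv.symm.trans (ih x (by simp) w hw)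

/-- C4 (one direction): a single exchange step preserves reachability within `USet`. -/
lemma step_pres {G : SimpleGraph V} {F₀ : Fin k → SimpleGraph V} {e₀ : Sym2 V}
    (h₀ : StInv G F₀ e₀) {F : Fin k → SimpleGraph V} {x y : V}
    (hR : Reach F₀ e₀ F s(x,y)) (i : Fin k) (f : Sym2 V)
    (hf : f ∈ (F i).edgeSet)
    (hcut : ¬((F i).deleteEdges {f}).Reachable x y) :
    ∀ j u v, (restrict (USet F₀ e₀) (F j)).Reachable u v →
      (restrict (USet F₀ e₀) ((xchg F i x y f) j)).Reachable u v := by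
  intro j u v h
  rcases eq_or_ne j i with rfl | hj
  swap
  · rw [xchg, Function.update_of_ne hj]; exact h
  revert hf hcut
  induction f using Sym2.ind with
  | _ a b =>
    intro hf hcut
    obtain ⟨hmax, hxyG, hfree⟩ := reach_inv h₀ hR
    set U := USet F₀ e₀ with hU
    set H := restrict U (F j) with hH
    set K := restrict U ((xchg F j x y s(a,b)) j) with hK
    obtain ⟨W, hWR, hWcut⟩ := reach_walk h₀ hR j
    have hfW : s(a,b) ∈ W.edges := hWcut s(a,b) hf hcut
    have haW : a ∈ W.support := Walk.fst_mem_support_of_mem_edges _ hfW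
    have hbW : b ∈ W.support := Walk.snd_mem_support_of_mem_edges _ hfW
    have hxyR : s(x,y) ∈ RSet F₀ e₀ := ⟨F, hR⟩
    have hxU : x ∈ U := ⟨s(x,y), hxyR, by simp⟩
    have hyU : y ∈ U := ⟨s(x,y), hxyR, by simp⟩
    have hxyne : x ≠ y := (G.mem_edgeSet.mp hxyG).ne
    -- K contains H minus f, and the edge xy
    have hHfK : H.deleteEdges {s(a,b)} ≤ K := by
      intro c d hcd
      rcases hcd with ⟨⟨h1, h2, h3⟩, h4⟩
      refine ⟨?_, h2, h3⟩
      rw [xchg, Function.update_self]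
      exact Or.inl (by rw [deleteEdges_adj]; exact ⟨h1, fun hc => h4 ((fromEdgeSet_adj _).mpr ⟨hc, h1.ne⟩)⟩)
    have hKxy : K.Adj x y := by
      refine ⟨?_, hxU, hyU⟩
      rw [xchg, Function.update_self]
      exact Or.inr ((fromEdgeSet_adj _).mpr ⟨rfl, hxyne⟩)
    -- reachability facts inside H
    have hHxa : H.Reachable x a := ⟨W.takeUntil a haW⟩
    have hHxb : H.Reachable x b := ⟨W.takeUntil b hbW⟩
    have hHay : H.Reachable a y := ⟨W.dropUntil a haW⟩
    have hHby : H.Reachable b y := ⟨W.dropUntil b hbW⟩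
    have hnxy : ¬(H.deleteEdges {s(a,b)}).Reachable x y := by
      intro hc
      exact hcut (hc.mono (deleteEdges_mono (restrict_le _ _)))
    have hxor : (H.deleteEdges {s(a,b)}).Reachable x a ∨
        (H.deleteEdges {s(a,b)}).Reachable x b := by
      rcases reachable_delete_edge_cases (a := a) (b := b) hHxa with h1 | ⟨h1, h2⟩ | ⟨h1, h2⟩
      · exact Or.inl h1
      · exact Or.inl h1
      · exact Or.inr h1
    have hyor : (H.deleteEdges {s(a,b)}).Reachable y a ∨
        (H.deleteEdges {s(a,b)}).Reachable y b := by
      rcases reachable_delete_edge_cases (a := a) (b := b) hHay.symm with h1 | ⟨h1, h2⟩ | ⟨h1, h2⟩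
      · exact Or.inl h1
      · exact Or.inl h1
      · exact Or.inr h1
    have hKab : K.Reachable a b := by
      rcases hxor with hxa | hxb
      · rcases hyor with hya | hyb
        · exact absurd (hxa.trans hya.symm) hnxy
        · exact ((hxa.mono hHfK).symm.trans hKxy.reachable).trans (hyb.mono hHfK)
      · rcases hyor with hya | hyb
        · exact ((hya.mono hHfK).symm.trans hKxy.symm.reachable).trans (hxb.mono hHfK)
        · exact absurd (hxb.trans hyb.symm) hnxy
    -- now reroute any H-walk
    obtain ⟨Wuv⟩ := h
    refine reachable_of_walk_detour (a := a) (b := b) Wuv ?_ hKab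
    intro g hg hgf
    have hgH : g ∈ H.edgeSet := Walk.edges_subset_edgeSet _ hg
    have : g ∈ (H.deleteEdges {s(a,b)}).edgeSet := by
      rw [edgeSet_del_edge]
      exact ⟨hgH, hgf⟩
    exact edgeSet_mono hHfK this

lemma sup_edge_delete_eq {H : SimpleGraph V} {f : Sym2 V} {x y : V}
    (hf : f ∈ H.edgeSet) (hxy : s(x,y) ∉ H.edgeSet) (hne : x ≠ y) :
    ((H.deleteEdges {f}) ⊔ fromEdgeSet {s(x,y)}).deleteEdges {s(x,y)} = H.deleteEdges {f} := by
  ext u v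
  simp only [deleteEdges_adj, sup_adj, fromEdgeSet_adj, Set.mem_singleton_iff]
  constructor
  · rintro ⟨h1 | h1, h2⟩
    · exact h1
    · exact absurd h1.1 h2
  · intro h1
    refine ⟨Or.inl h1, fun hc => hxy ?_⟩
    rw [← hc]
    exact h1.1

lemma delete_sup_edge_eq {H : SimpleGraph V} {f : Sym2 V}
    (hf : f ∈ H.edgeSet) :
    (H.deleteEdges {f}) ⊔ fromEdgeSet {f} = H := by
  ext u v
  simp only [sup_adj, deleteEdges_adj, fromEdgeSet_adj, Set.mem_singleton_iff]
  constructor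
  · rintro (⟨h1, h2⟩ | ⟨h1, h2⟩)
    · exact h1
    · rw [← mem_edgeSet, h1]; exact hf
  · intro h1
    by_cases hc : s(u,v) = f
    · exact Or.inr ⟨hc, h1.ne⟩
    · exact Or.inl ⟨h1, hc⟩

/-- C4 (reverse direction). -/
lemma step_pres_rev {G : SimpleGraph V} {F₀ : Fin k → SimpleGraph V} {e₀ : Sym2 V}
    (h₀ : StInv G F₀ e₀) {F : Fin k → SimpleGraph V} {x y : V}
    (hR : Reach F₀ e₀ F s(x,y)) (i : Fin k) (f : Sym2 V)
    (hf : f ∈ (F i).edgeSet)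
    (hcut : ¬((F i).deleteEdges {f}).Reachable x y) :
    ∀ j u v, (restrict (USet F₀ e₀) ((xchg F i x y f) j)).Reachable u v →
      (restrict (USet F₀ e₀) (F j)).Reachable u v := by
  intro j u v h
  rcases eq_or_ne j i with rfl | hj
  swap
  · rw [xchg, Function.update_of_ne hj] at h; exact h
  revert hf hcut h
  induction f using Sym2.ind with
  | _ a b =>
    intro hf hcut h
    obtain ⟨hmax, hxyG, hfree⟩ := reach_inv h₀ hR
    have hxyne : x ≠ y := (G.mem_edgeSet.mp hxyG).ne
    set F' := xchg F j x y s(a,b) with hF'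
    have hR' : Reach F₀ e₀ F' s(a,b) := Reach.step j s(a,b) hR hf hcut
    have hF'j : F' j = ((F j).deleteEdges {s(a,b)}) ⊔ fromEdgeSet {s(x,y)} := by
      rw [hF', xchg, Function.update_self]
    have hxyE : s(x,y) ∈ (F' j).edgeSet := by
      rw [hF'j, edgeSet_sup_edge hxyne]
      exact Or.inr rfl
    have hEq : (F' j).deleteEdges {s(x,y)} = (F j).deleteEdges {s(a,b)} := by
      rw [hF'j]
      exact sup_edge_delete_eq hf (hfree j) hxyne
    have hcut' : ¬((F' j).deleteEdges {s(x,y)}).Reachable a b := by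
      rw [hEq]
      have hbr := (isAcyclic_iff_forall_edge_isBridge.mp (hmax.1.1 j).2) hf
      rw [isBridge_iff] at hbr
      exact hbr
    have hback : xchg F' j a b s(x,y) = F := by
      funext c
      rcases eq_or_ne c j with rfl | hc
      · rw [xchg, Function.update_self, hEq, delete_sup_edge_eq hf]
      · rw [xchg, Function.update_of_ne hc, hF', xchg, Function.update_of_ne hc]
    have := step_pres h₀ hR' j s(x,y) hxyE hcut' j u v h
    rwa [hback] at this

/-- C4: reachability within `USet` is invariant across all reachable states. -/
lemma reach_rel_iff {G : SimpleGraph V} {F₀ : Fin k → SimpleGraph V} {e₀ : Sym2 V}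
    (h₀ : StInv G F₀ e₀) {F : Fin k → SimpleGraph V} {e : Sym2 V}
    (hR : Reach F₀ e₀ F e) :
    ∀ j u v, (restrict (USet F₀ e₀) (F₀ j)).Reachable u v ↔
      (restrict (USet F₀ e₀) (F j)).Reachable u v := by
  induction hR with
  | base => intro j u v; rfl
  | @step F x y i f hR' hf hcut ih =>
    intro j u v
    exact (ih j u v).trans
      ⟨step_pres h₀ hR' i f hf hcut j u v, step_pres_rev h₀ hR' i f hf hcut j u v⟩

/-- C5, the Exchange Lemma: given a maximal forest tuple and a free `G`-edge `x₀y₀`,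
there is a set `U` containing both ends such that each forest restricted to `U`
connects all of `U`. -/
theorem exchange_lemma {G : SimpleGraph V} {F₀ : Fin k → SimpleGraph V}
    (hmax : IsMax G F₀) {x₀ y₀ : V} (he : G.Adj x₀ y₀)
    (hfree : ∀ i, s(x₀,y₀) ∉ (F₀ i).edgeSet) :
    ∃ U : Set V, x₀ ∈ U ∧ y₀ ∈ U ∧
      ∀ i : Fin k, ∀ u ∈ U, ∀ v ∈ U, (restrict U (F₀ i)).Reachable u v := by
  have h₀ : StInv G F₀ s(x₀,y₀) := ⟨hmax, G.mem_edgeSet.mpr he, hfree⟩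
  set U := USet F₀ s(x₀,y₀) with hU
  have hbase : s(x₀,y₀) ∈ RSet F₀ s(x₀,y₀) := ⟨F₀, Reach.base⟩
  refine ⟨U, ⟨s(x₀,y₀), hbase, by simp⟩, ⟨s(x₀,y₀), hbase, by simp⟩, ?_⟩
  intro i u hu v hv
  -- each RG-edge gives reachability in restrict U (F₀ i)
  have relR : ∀ c d, (fromEdgeSet (RSet F₀ s(x₀,y₀))).Adj c d →
      (restrict U (F₀ i)).Reachable c d := by
    intro c d hcd
    obtain ⟨⟨Fg, hRg⟩, hne⟩ := (fromEdgeSet_adj _).mp hcd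
    obtain ⟨W, -, -⟩ := reach_walk h₀ hRg i
    exact (reach_rel_iff h₀ hRg i c d).mpr ⟨W⟩
  -- u and v are RG-connected
  obtain ⟨eu, hReu, hueu⟩ := hu
  obtain ⟨ev, hRev, hvev⟩ := hv
  obtain ⟨Fu, hRFu⟩ := hReu
  obtain ⟨Fv, hRFv⟩ := hRev
  have hux : (fromEdgeSet (RSet F₀ s(x₀,y₀))).Reachable u x₀ :=
    rg_conn h₀ hRFu u hueu x₀ (by simp)
  have hvx : (fromEdgeSet (RSet F₀ s(x₀,y₀))).Reachable v x₀ :=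
    rg_conn h₀ hRFv v hvev x₀ (by simp)
  obtain ⟨Wuv⟩ := hux.trans hvx.symm
  -- chain along the RG-walk
  clear hux hvx hueu hvev hRFu hRFv
  induction Wuv with
  | nil => exact Reachable.refl _
  | @cons c d e hadj W ih => exact (relR c d hadj).trans ih

end Exchange

section Partition
variable [Fintype V] [DecidableEq V]

attribute [local instance] Classical.propDecidable

/-- `B` is connected via edges inside `B` in `H`. -/
def conn (B : Finset V) (H : SimpleGraph V) : Prop :=
  ∀ u ∈ B, ∀ v ∈ B, (restrict (↑B) H).Reachable u v

def IsPart (P : Finset (Finset V)) : Prop :=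
  (∀ B ∈ P, B.Nonempty) ∧ (∀ v : V, ∃ B ∈ P, v ∈ B) ∧
  (∀ B ∈ P, ∀ B' ∈ P, B ≠ B' → Disjoint B B')

/-- an edge is crossing if no block contains both its ends. -/
def crossP (P : Finset (Finset V)) (e : Sym2 V) : Prop := ¬ ∃ B ∈ P, ∀ v ∈ e, v ∈ B

lemma block_eq {P : Finset (Finset V)} (hP : IsPart P) {B B' : Finset V}
    (hB : B ∈ P) (hB' : B' ∈ P) {v : V} (hv : v ∈ B) (hv' : v ∈ B') : B = B' := by
  by_contra hne
  exact absurd hv' (Finset.disjoint_left.mp (hP.2.2 B hB B' hB' hne) hv)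

lemma conn_union_of_adj {H : SimpleGraph V} {Ba Bb : Finset V} {a b : V}
    (hconnA : conn Ba H) (hconnB : conn Bb H) (hEab : H.Adj a b)
    (ha : a ∈ Ba) (hb : b ∈ Bb) : conn (Ba ∪ Bb) H := by
  have hsubA : restrict (↑Ba) H ≤ restrict (↑(Ba ∪ Bb)) H :=
    restrict_mono_set (by simp [Finset.coe_union]) H
  have hsubB : restrict (↑Bb) H ≤ restrict (↑(Ba ∪ Bb)) H :=
    restrict_mono_set (by simp [Finset.coe_union]) H
  have hadj : (restrict (↑(Ba ∪ Bb)) H).Adj a b :=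
    ⟨hEab, by simp [ha], by simp [hb]⟩
  have hto_a : ∀ w ∈ Ba ∪ Bb, (restrict (↑(Ba ∪ Bb)) H).Reachable w a := by
    intro w hw
    rcases Finset.mem_union.mp hw with hw | hw
    · exact (hconnA w hw a ha).mono hsubA
    · exact ((hconnB w hw b hb).mono hsubB).trans hadj.symm.reachable
  intro u hu v hv
  exact (hto_a u hu).trans (hto_a v hv).symm

/-- In a forest with connected blocks, any two blocks are joined by at most one edge:
an edge from `Ba` to `Bb` must equal `s(a,b)`. -/
lemma between_edge_unique {H : SimpleGraph V} (hH : H.IsAcyclic) {P : Finset (Finset V)}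
    (hP : IsPart P) (hconn : ∀ B ∈ P, conn B H) {Ba Bb : Finset V} {a b : V}
    (hBa : Ba ∈ P) (hBb : Bb ∈ P) (hne : Ba ≠ Bb) (ha : a ∈ Ba) (hb : b ∈ Bb)
    (hEab : H.Adj a b) {c d : V} (hc : c ∈ Ba) (hd : d ∈ Bb) (hEcd : H.Adj c d) :
    s(c,d) = s(a,b) := by
  by_contra hg
  have hdisj : Disjoint Ba Bb := hP.2.2 Ba hBa Bb hBb hne
  have hbrg := (isAcyclic_iff_forall_edge_isBridge.mp hH) (H.mem_edgeSet.mpr hEcd)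
  rw [isBridge_iff] at hbrg
  refine hbrg ?_
  have hrA : restrict (↑Ba) H ≤ H \ fromEdgeSet {s(c,d)} := by
    intro u w huw
    refine ⟨huw.1, ?_⟩
    intro hcon
    rw [fromEdgeSet_adj] at hcon
    obtain ⟨hcon, -⟩ := hcon
    rw [Set.mem_singleton_iff, Sym2.eq_iff] at hcon
    rcases hcon with ⟨rfl, rfl⟩ | ⟨rfl, rfl⟩
    · exact Finset.disjoint_left.mp hdisj (Finset.mem_coe.mp huw.2.2) hd
    · exact Finset.disjoint_left.mp hdisj (Finset.mem_coe.mp huw.2.1) hd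
  have hrB : restrict (↑Bb) H ≤ H \ fromEdgeSet {s(c,d)} := by
    intro u w huw
    refine ⟨huw.1, ?_⟩
    intro hcon
    rw [fromEdgeSet_adj] at hcon
    obtain ⟨hcon, -⟩ := hcon
    rw [Set.mem_singleton_iff, Sym2.eq_iff] at hcon
    rcases hcon with ⟨rfl, rfl⟩ | ⟨rfl, rfl⟩
    · exact Finset.disjoint_left.mp hdisj hc (Finset.mem_coe.mp huw.2.1)
    · exact Finset.disjoint_left.mp hdisj hc (Finset.mem_coe.mp huw.2.2)
  have hadj : (H \ fromEdgeSet {s(c,d)}).Adj a b := by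
    refine ⟨hEab, ?_⟩
    intro hcon
    rw [fromEdgeSet_adj] at hcon
    obtain ⟨hcon, -⟩ := hcon
    rw [Set.mem_singleton_iff] at hcon
    exact hg hcon.symm
  exact (((hconn Ba hBa c hc a ha).mono hrA).trans hadj.reachable).trans
      ((hconn Bb hBb b hb d hd).mono hrB)

/-- C': a forest whose blocks are internally connected has at most `p - 1` crossing edges. -/
lemma forest_cross_bound {H : SimpleGraph V} (hH : H.IsAcyclic) :
    ∀ n (P : Finset (Finset V)), P.card = n → IsPart P → (∀ B ∈ P, conn B H) →
    (Finset.univ.filter (fun e : Sym2 V => e ∈ H.edgeSet ∧ crossP P e)).card ≤ P.card - 1 := by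
  intro n
  induction n using Nat.strong_induction_on with
  | _ n IH =>
    intro P hcard hP hconn
    set CR := Finset.univ.filter (fun e : Sym2 V => e ∈ H.edgeSet ∧ crossP P e) with hCR
    by_cases hempty : CR = ∅
    · rw [hempty]; simp
    obtain ⟨e, he⟩ := Finset.nonempty_iff_ne_empty.mpr hempty
    rw [hCR, Finset.mem_filter] at he
    obtain ⟨-, heE, hecr⟩ := he
    revert heE hecr
    induction e using Sym2.ind with
    | _ a b =>
      intro heE hecr
      have hEab : H.Adj a b := H.mem_edgeSet.mp heE
      obtain ⟨Ba, hBaP, haBa⟩ := hP.2.1 a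
      obtain ⟨Bb, hBbP, hbBb⟩ := hP.2.1 b
      have hne : Ba ≠ Bb := by
        rintro rfl
        exact hecr ⟨Ba, hBaP, fun v hv => by
          rw [Sym2.mem_iff] at hv
          rcases hv with rfl | rfl
          · exact haBa
          · exact hbBb⟩
      have hbe : Bb ∈ P.erase Ba := Finset.mem_erase.mpr ⟨Ne.symm hne, hBbP⟩
      set P2 := (P.erase Ba).erase Bb with hP2
      set P' := insert (Ba ∪ Bb) P2 with hP'
      have hP2sub : P2 ⊆ P := by
        intro C hC
        exact Finset.mem_of_mem_erase (Finset.mem_of_mem_erase hC)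
      have hUnotin : Ba ∪ Bb ∉ P2 := by
        intro hmem
        have hCP : Ba ∪ Bb ∈ P := hP2sub hmem
        have : Ba ∪ Bb = Ba := block_eq hP hCP hBaP (Finset.mem_union_left _ haBa) haBa
        rw [hP2] at hmem
        have := Finset.ne_of_mem_erase (Finset.mem_of_mem_erase hmem)
        exact this ‹Ba ∪ Bb = Ba›
      have hcard2 : P2.card = P.card - 2 := by
        rw [hP2, Finset.card_erase_of_mem hbe, Finset.card_erase_of_mem hBaP]
        omega
      have hPge2 : 2 ≤ P.card := Finset.one_lt_card.mpr ⟨Ba, hBaP, Bb, hBbP, hne⟩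
      have hcard' : P'.card = P.card - 1 := by
        rw [hP', Finset.card_insert_of_notMem hUnotin, hcard2]
        omega
      -- P' is a partition with connected blocks
      have hP'part : IsPart P' := by
        refine ⟨?_, ?_, ?_⟩
        · intro B hB
          rcases Finset.mem_insert.mp hB with rfl | hB
          · exact ⟨a, Finset.mem_union_left _ haBa⟩
          · exact hP.1 B (hP2sub hB)
        · intro v
          obtain ⟨Bv, hBvP, hvBv⟩ := hP.2.1 v
          by_cases hv1 : Bv = Ba
          · exact ⟨Ba ∪ Bb, Finset.mem_insert_self _ _,
              Finset.mem_union_left _ (hv1 ▸ hvBv)⟩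
          by_cases hv2 : Bv = Bb
          · exact ⟨Ba ∪ Bb, Finset.mem_insert_self _ _,
              Finset.mem_union_right _ (hv2 ▸ hvBv)⟩
          · exact ⟨Bv, Finset.mem_insert_of_mem
              (Finset.mem_erase.mpr ⟨hv2, Finset.mem_erase.mpr ⟨hv1, hBvP⟩⟩), hvBv⟩
        · intro B hB B' hB' hBB'
          rcases Finset.mem_insert.mp hB with rfl | hB
          · rcases Finset.mem_insert.mp hB' with rfl | hB'
            · exact absurd rfl hBB'
            · have h1 : B' ≠ Ba := Finset.ne_of_mem_erase (Finset.mem_of_mem_erase hB')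
              have h2 : B' ≠ Bb := Finset.ne_of_mem_erase hB'
              rw [Finset.disjoint_union_left]
              exact ⟨(hP.2.2 Ba hBaP B' (hP2sub hB') (Ne.symm h1)).symm.symm,
                (hP.2.2 B' (hP2sub hB') Bb hBbP h2).symm⟩
          · rcases Finset.mem_insert.mp hB' with rfl | hB'
            · have h1 : B ≠ Ba := Finset.ne_of_mem_erase (Finset.mem_of_mem_erase hB)
              have h2 : B ≠ Bb := Finset.ne_of_mem_erase hB
              rw [Finset.disjoint_union_right]
              exact ⟨hP.2.2 B (hP2sub hB) Ba hBaP h1, hP.2.2 B (hP2sub hB) Bb hBbP h2⟩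
            · exact hP.2.2 B (hP2sub hB) B' (hP2sub hB') hBB'
      have hconn' : ∀ B ∈ P', conn B H := by
        intro B hB
        rcases Finset.mem_insert.mp hB with rfl | hB
        · exact conn_union_of_adj (hconn Ba hBaP) (hconn Bb hBbP) hEab haBa hbBb
        · exact hconn B (hP2sub hB)
      -- crossing edges of P are crossing edges of P' plus s(a,b)
      set CR' := Finset.univ.filter (fun e : Sym2 V => e ∈ H.edgeSet ∧ crossP P' e) with hCR'
      have hsub : CR ⊆ insert s(a,b) CR' := by
        intro g hg
        rw [hCR, Finset.mem_filter] at hg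
        obtain ⟨-, hgE, hgcr⟩ := hg
        by_cases hgab : g = s(a,b)
        · rw [hgab]; exact Finset.mem_insert_self _ _
        refine Finset.mem_insert_of_mem ?_
        rw [hCR', Finset.mem_filter]
        refine ⟨Finset.mem_univ _, hgE, ?_⟩
        rintro ⟨C, hCp', hCg⟩
        rcases Finset.mem_insert.mp hCp' with rfl | hC2
        · -- g has both ends in Ba ∪ Bb but crosses P
          revert hgE hgcr hgab hCg
          induction g using Sym2.ind with
          | _ c d =>
            intro hgE hgcr hgab hCg
            have hcm := hCg c (by simp)
            have hdm := hCg d (by simp)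
            have hEcd : H.Adj c d := H.mem_edgeSet.mp hgE
            have hnotsame : ¬ (∃ B ∈ P, c ∈ B ∧ d ∈ B) := by
              rintro ⟨B, hBP, h1, h2⟩
              exact hgcr ⟨B, hBP, fun v hv => by
                rw [Sym2.mem_iff] at hv
                rcases hv with rfl | rfl
                · exact h1
                · exact h2⟩
            rcases Finset.mem_union.mp hcm with hcA | hcB
            · rcases Finset.mem_union.mp hdm with hdA | hdB
              · exact hnotsame ⟨Ba, hBaP, hcA, hdA⟩
              · exact hgab (between_edge_unique hH hP hconn hBaP hBbP hne haBa hbBb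
                  hEab hcA hdB hEcd)
            · rcases Finset.mem_union.mp hdm with hdA | hdB
              · have := between_edge_unique hH hP hconn hBaP hBbP hne haBa hbBb
                  hEab hdA hcB hEcd.symm
                rw [Sym2.eq_swap] at this
                exact hgab this
              · exact hnotsame ⟨Bb, hBbP, hcB, hdB⟩
        · exact hgcr ⟨C, hP2sub hC2, hCg⟩
      have hIH := IH (P.card - 1) (by omega) P' (by omega) hP'part hconn'
      rw [← hCR'] at hIH
      have h1 : CR.card ≤ CR'.card + 1 := by
        calc CR.card ≤ (insert s(a,b) CR').card := Finset.card_le_card hsub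
        _ ≤ CR'.card + 1 := Finset.card_insert_le _ _
      rw [hcard'] at hIH
      omega

def cutPred (B : Finset V) (e : Sym2 V) : Prop := (∃ v ∈ e, v ∈ B) ∧ (∃ v ∈ e, v ∉ B)

/-- Every walk in `G` minus the edge cut of `B` stays in `B`. -/
lemma stay_in_block {G : SimpleGraph V} {B : Finset V} {u v : V}
    (W : (G.deleteEdges ↑(Finset.univ.filter
      (fun e : Sym2 V => e ∈ G.edgeSet ∧ cutPred B e))).Walk u v)
    (hu : u ∈ B) : v ∈ B := by
  induction W with
  | nil => exact hu
  | @cons c d e hadj W ih =>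
    refine ih ?_
    by_contra hd
    rw [deleteEdges_adj] at hadj
    refine hadj.2 ?_
    rw [Finset.coe_filter]
    refine ⟨Finset.mem_coe.mpr (Finset.mem_univ _), G.mem_edgeSet.mpr hadj.1, ?_, ?_⟩
    · exact ⟨c, by simp, hu⟩
    · exact ⟨d, by simp, hd⟩

/-- the cut of a nontrivial block has at least `2k` edges. -/
lemma cut_lower {G : SimpleGraph V} {k : ℕ}
    (hG : ∀ S : Finset (Sym2 V), S.card < 2*k → (G.deleteEdges ↑S).Connected)
    {B : Finset V} (hB : B.Nonempty) (hBne : B ≠ Finset.univ) :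
    2*k ≤ (Finset.univ.filter (fun e : Sym2 V => e ∈ G.edgeSet ∧ cutPred B e)).card := by
  by_contra hlt
  push_neg at hlt
  have hconn := hG _ hlt
  obtain ⟨b, hb⟩ := hB
  obtain ⟨c, hc⟩ : ∃ c, c ∉ B := by
    by_contra hall
    push_neg at hall
    exact hBne (Finset.eq_univ_iff_forall.mpr hall)
  obtain ⟨W⟩ := hconn.preconnected b c
  exact hc (stay_in_block W hb)

/-- double counting: the sum of cut sizes is at most twice the number of crossing edges. -/
lemma sum_cut_le {G : SimpleGraph V} {P : Finset (Finset V)} (hP : IsPart P) :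
    ∑ B ∈ P, (Finset.univ.filter (fun e : Sym2 V => e ∈ G.edgeSet ∧ cutPred B e)).card
      ≤ 2 * (Finset.univ.filter (fun e : Sym2 V => e ∈ G.edgeSet ∧ crossP P e)).card := by
  set CRS := Finset.univ.filter (fun e : Sym2 V => e ∈ G.edgeSet ∧ crossP P e) with hCRS
  have hcutcr : ∀ B ∈ P,
      Finset.univ.filter (fun e : Sym2 V => e ∈ G.edgeSet ∧ cutPred B e)
        = CRS.filter (fun e => cutPred B e) := by
    intro B hB
    ext e
    rw [hCRS, Finset.filter_filter, Finset.mem_filter, Finset.mem_filter]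
    constructor
    · rintro ⟨h1, h2, h3⟩
      refine ⟨h1, ⟨h2, ?_⟩, h3⟩
      rintro ⟨C, hCP, hCe⟩
      obtain ⟨⟨v, hve, hvB⟩, ⟨w, hwe, hwB⟩⟩ := h3
      have : C = B := block_eq hP hCP hB (hCe v hve) hvB
      exact hwB (this ▸ hCe w hwe)
    · rintro ⟨h1, ⟨h2, -⟩, h3⟩
      exact ⟨h1, h2, h3⟩
  calc ∑ B ∈ P, (Finset.univ.filter
        (fun e : Sym2 V => e ∈ G.edgeSet ∧ cutPred B e)).card
      = ∑ B ∈ P, (CRS.filter (fun e => cutPred B e)).card :=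
        Finset.sum_congr rfl (fun B hB => by rw [hcutcr B hB])
    _ = ∑ B ∈ P, ∑ e ∈ CRS, if cutPred B e then 1 else 0 := by
        refine Finset.sum_congr rfl fun B _ => ?_
        rw [Finset.card_filter]
    _ = ∑ e ∈ CRS, ∑ B ∈ P, if cutPred B e then 1 else 0 := Finset.sum_comm
    _ = ∑ e ∈ CRS, (P.filter (fun B => cutPred B e)).card := by
        refine Finset.sum_congr rfl fun e _ => ?_
        rw [Finset.card_filter]
    _ ≤ ∑ _e ∈ CRS, 2 := by
        refine Finset.sum_le_sum fun e he => ?_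
        rw [hCRS, Finset.mem_filter] at he
        obtain ⟨-, heE, -⟩ := he
        revert heE
        induction e using Sym2.ind with
        | _ a b =>
          intro heE
          obtain ⟨Ba, hBaP, haBa⟩ := hP.2.1 a
          obtain ⟨Bb, hBbP, hbBb⟩ := hP.2.1 b
          have hsub : P.filter (fun B => cutPred B s(a,b)) ⊆ {Ba, Bb} := by
            intro B hB
            rw [Finset.mem_filter] at hB
            obtain ⟨hBP, ⟨v, hve, hvB⟩, -⟩ := hB
            rw [Sym2.mem_iff] at hve
            rw [Finset.mem_insert, Finset.mem_singleton]
            rcases hve with rfl | rfl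
            · exact Or.inl (block_eq hP hBP hBaP hvB haBa)
            · exact Or.inr (block_eq hP hBP hBbP hvB hbBb)
          calc (P.filter (fun B => cutPred B s(a,b))).card
              ≤ ({Ba, Bb} : Finset (Finset V)).card := Finset.card_le_card hsub
            _ ≤ 2 := Finset.card_insert_le _ _ |>.trans (by simp)
    _ = 2 * CRS.card := by rw [Finset.sum_const, smul_eq_mul, mul_comm]

/-- the crossing edges of a terminal partition number at most `k (p-1)`. -/
lemma cross_upper {G : SimpleGraph V} {k : ℕ} {F : Fin k → SimpleGraph V}
    (hgood : Good G F) {P : Finset (Finset V)} (hP : IsPart P)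
    (hconn : ∀ B ∈ P, ∀ i, conn B (F i))
    (hterm : ∀ e, e ∈ G.edgeSet → crossP P e → ∃ i, e ∈ (F i).edgeSet) :
    (Finset.univ.filter (fun e : Sym2 V => e ∈ G.edgeSet ∧ crossP P e)).card
      ≤ k * (P.card - 1) := by
  have hsub : Finset.univ.filter (fun e : Sym2 V => e ∈ G.edgeSet ∧ crossP P e)
      ⊆ (Finset.univ : Finset (Fin k)).biUnion
        (fun i => Finset.univ.filter (fun e : Sym2 V => e ∈ (F i).edgeSet ∧ crossP P e)) := by
    intro e he
    rw [Finset.mem_filter] at he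
    obtain ⟨-, heE, hecr⟩ := he
    obtain ⟨i, hi⟩ := hterm e heE hecr
    exact Finset.mem_biUnion.mpr ⟨i, Finset.mem_univ _, Finset.mem_filter.mpr
      ⟨Finset.mem_univ _, hi, hecr⟩⟩
  calc (Finset.univ.filter (fun e : Sym2 V => e ∈ G.edgeSet ∧ crossP P e)).card
      ≤ ((Finset.univ : Finset (Fin k)).biUnion
        (fun i => Finset.univ.filter
          (fun e : Sym2 V => e ∈ (F i).edgeSet ∧ crossP P e))).card :=
        Finset.card_le_card hsub
    _ ≤ ∑ i : Fin k, (Finset.univ.filter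
          (fun e : Sym2 V => e ∈ (F i).edgeSet ∧ crossP P e)).card :=
        Finset.card_biUnion_le
    _ ≤ ∑ _i : Fin k, (P.card - 1) := by
        refine Finset.sum_le_sum fun i _ => ?_
        exact forest_cross_bound (hgood.1 i).2 P.card P rfl hP (fun B hB => hconn B hB i)
    _ = k * (P.card - 1) := by rw [Finset.sum_const]; simp [mul_comm]

/-- a terminal partition must be trivial. -/
lemma terminal_card_one [Nonempty V] {G : SimpleGraph V} {k : ℕ} (hk : 1 ≤ k)
    {F : Fin k → SimpleGraph V}
    (hG : ∀ S : Finset (Sym2 V), S.card < 2*k → (G.deleteEdges ↑S).Connected)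
    (hgood : Good G F) {P : Finset (Finset V)} (hP : IsPart P)
    (hconn : ∀ B ∈ P, ∀ i, conn B (F i))
    (hterm : ∀ e, e ∈ G.edgeSet → crossP P e → ∃ i, e ∈ (F i).edgeSet) :
    P.card = 1 := by
  have hpos : 0 < P.card := by
    obtain ⟨B, hB, -⟩ := hP.2.1 (Classical.arbitrary V)
    exact Finset.card_pos.mpr ⟨B, hB⟩
  by_contra hne1
  have hp2 : 2 ≤ P.card := by omega
  -- every block is proper
  have hproper : ∀ B ∈ P, B ≠ Finset.univ := by
    intro B hB huniv
    obtain ⟨B1, hB1, B2, hB2, h12⟩ := Finset.one_lt_card.mp hp2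
    have hBne : B1 ≠ B ∨ B2 ≠ B := by
      rcases eq_or_ne B1 B with rfl | h
      · exact Or.inr (Ne.symm h12)
      · exact Or.inl h
    rcases hBne with h | h
    · obtain ⟨v, hv⟩ := hP.1 B1 hB1
      exact absurd (block_eq hP hB1 hB hv (huniv ▸ Finset.mem_univ v)) h
    · obtain ⟨v, hv⟩ := hP.1 B2 hB2
      exact absurd (block_eq hP hB2 hB hv (huniv ▸ Finset.mem_univ v)) h
  have hlow : 2*k*P.card ≤ ∑ B ∈ P, (Finset.univ.filter
      (fun e : Sym2 V => e ∈ G.edgeSet ∧ cutPred B e)).card := by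
    calc 2*k*P.card = ∑ _B ∈ P, 2*k := by rw [Finset.sum_const]; simp [mul_comm]
      _ ≤ _ := Finset.sum_le_sum fun B hB => cut_lower hG (hP.1 B hB) (hproper B hB)
  have hhigh := sum_cut_le (G := G) hP
  have hcross := cross_upper hgood hP hconn hterm
  have hfin := hlow.trans hhigh
  have hps : P.card = (P.card - 1) + 1 := by omega
  have hxx : 2*k*P.card = 2*(k*(P.card-1)) + 2*k := by nth_rewrite 1 [hps]; ring
  omega

/-- merging process: starting from any valid partition, reach a terminal one. -/
lemma process [Nonempty V] {G : SimpleGraph V} {k : ℕ} {F₀ : Fin k → SimpleGraph V}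
    (hmax : IsMax G F₀) :
    ∀ n (P : Finset (Finset V)), P.card ≤ n → IsPart P →
      (∀ B ∈ P, ∀ i, conn B (F₀ i)) →
      ∃ P', IsPart P' ∧ (∀ B ∈ P', ∀ i, conn B (F₀ i)) ∧
        (∀ e, e ∈ G.edgeSet → crossP P' e → ∃ i, e ∈ (F₀ i).edgeSet) := by
  intro n
  induction n with
  | zero =>
    intro P hcard hP hconn
    obtain ⟨B, hB, -⟩ := hP.2.1 (Classical.arbitrary V)
    have := Finset.card_pos.mpr ⟨B, hB⟩
    omega
  | succ n IH =>
    intro P hcard hP hconn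
    by_cases hterm : ∀ e, e ∈ G.edgeSet → crossP P e → ∃ i, e ∈ (F₀ i).edgeSet
    · exact ⟨P, hP, hconn, hterm⟩
    push_neg at hterm
    obtain ⟨e, heE, hecr, hfree⟩ := hterm
    revert heE hecr hfree
    induction e using Sym2.ind with
    | _ x₀ y₀ =>
      intro heE hecr hfree
      obtain ⟨U, hxU, hyU, hUconn⟩ :=
        exchange_lemma hmax (G.mem_edgeSet.mp heE) hfree
      set Q : Finset V → Prop := fun B => ∃ v ∈ B, v ∈ U with hQ
      set Bstar : Finset V := (P.filter Q).sup id with hBstar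
      set P' : Finset (Finset V) := insert Bstar (P.filter (fun B => ¬ Q B)) with hP'
      have hmemBstar : ∀ w : V, w ∈ Bstar ↔ ∃ B ∈ P.filter Q, w ∈ B := by
        intro w
        rw [hBstar]
        exact Finset.mem_sup
      have hUsub : ∀ u ∈ U, u ∈ Bstar := by
        intro u hu
        obtain ⟨Bu, hBu, huBu⟩ := hP.2.1 u
        exact (hmemBstar u).mpr ⟨Bu, Finset.mem_filter.mpr ⟨hBu, ⟨u, huBu, hu⟩⟩, huBu⟩
      obtain ⟨Bx, hBx, hxBx⟩ := hP.2.1 x₀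
      obtain ⟨By, hBy, hyBy⟩ := hP.2.1 y₀
      have hBxQ : Q Bx := ⟨x₀, hxBx, hxU⟩
      have hByQ : Q By := ⟨y₀, hyBy, hyU⟩
      have hBxBy : Bx ≠ By := by
        rintro rfl
        exact hecr ⟨Bx, hBx, fun v hv => by
          rw [Sym2.mem_iff] at hv
          rcases hv with rfl | rfl
          · exact hxBx
          · exact hyBy⟩
      have hfilQ2 : 2 ≤ (P.filter Q).card :=
        Finset.one_lt_card.mpr ⟨Bx, Finset.mem_filter.mpr ⟨hBx, hBxQ⟩,
          By, Finset.mem_filter.mpr ⟨hBy, hByQ⟩, hBxBy⟩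
      have hsplit := Finset.card_filter_add_card_filter_not (s := P) Q
      have hcard' : P'.card ≤ n := by
        calc P'.card ≤ (P.filter (fun B => ¬ Q B)).card + 1 := Finset.card_insert_le _ _
          _ ≤ n := by omega
      -- blocks of P' are internally connected
      have hnotQsub : P.filter (fun B => ¬ Q B) ⊆ P := Finset.filter_subset _ _
      have hconnStar : ∀ i, conn Bstar (F₀ i) := by
        intro i u hu v hv
        obtain ⟨Bu, hBuf, huBu⟩ := (hmemBstar u).mp hu
        obtain ⟨Bv, hBvf, hvBv⟩ := (hmemBstar v).mp hv
        rw [Finset.mem_filter] at hBuf hBvf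
        obtain ⟨wu, hwuB, hwuU⟩ := hBuf.2
        obtain ⟨wv, hwvB, hwvU⟩ := hBvf.2
        have hsubU : restrict U (F₀ i) ≤ restrict (↑Bstar) (F₀ i) :=
          restrict_mono_set (fun z hz => Finset.mem_coe.mpr (hUsub z hz)) _
        have hsubB : ∀ B, B ∈ P.filter Q → restrict (↑B) (F₀ i) ≤ restrict (↑Bstar) (F₀ i) := by
          intro B hBf
          refine restrict_mono_set (fun z hz => ?_) _
          exact Finset.mem_coe.mpr ((hmemBstar z).mpr ⟨B, hBf, Finset.mem_coe.mp hz⟩)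
        have h1 : (restrict (↑Bstar) (F₀ i)).Reachable u wu :=
          (hconn Bu hBuf.1 i u huBu wu hwuB).mono
            (hsubB Bu (Finset.mem_filter.mpr hBuf))
        have h2 : (restrict (↑Bstar) (F₀ i)).Reachable wu wv :=
          (hUconn i wu hwuU wv hwvU).mono hsubU
        have h3 : (restrict (↑Bstar) (F₀ i)).Reachable wv v :=
          ((hconn Bv hBvf.1 i v hvBv wv hwvB).mono
            (hsubB Bv (Finset.mem_filter.mpr hBvf))).symm
        exact (h1.trans h2).trans h3
      have hP'part : IsPart P' := by
        refine ⟨?_, ?_, ?_⟩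
        · intro B hB
          rcases Finset.mem_insert.mp hB with rfl | hB
          · exact ⟨x₀, hUsub x₀ hxU⟩
          · exact hP.1 B (hnotQsub hB)
        · intro v
          obtain ⟨Bv, hBv, hvBv⟩ := hP.2.1 v
          by_cases hq : Q Bv
          · exact ⟨Bstar, Finset.mem_insert_self _ _,
              (hmemBstar v).mpr ⟨Bv, Finset.mem_filter.mpr ⟨hBv, hq⟩, hvBv⟩⟩
          · exact ⟨Bv, Finset.mem_insert_of_mem (Finset.mem_filter.mpr ⟨hBv, hq⟩), hvBv⟩
        · intro B hB B' hB' hBB'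
          have hdisjStar : ∀ C, C ∈ P.filter (fun B => ¬ Q B) → Disjoint Bstar C := by
            intro C hC
            rw [Finset.disjoint_left]
            intro w hw hwC
            obtain ⟨Bw, hBwf, hwBw⟩ := (hmemBstar w).mp hw
            rw [Finset.mem_filter] at hBwf hC
            have : Bw = C := block_eq hP hBwf.1 hC.1 hwBw hwC
            exact hC.2 (this ▸ hBwf.2)
          rcases Finset.mem_insert.mp hB with rfl | hB
          · rcases Finset.mem_insert.mp hB' with rfl | hB'
            · exact absurd rfl hBB'
            · exact hdisjStar B' hB'
          · rcases Finset.mem_insert.mp hB' with rfl | hB'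
            · exact (hdisjStar B hB).symm
            · exact hP.2.2 B (hnotQsub hB) B' (hnotQsub hB') hBB'
      have hconn' : ∀ B ∈ P', ∀ i, conn B (F₀ i) := by
        intro B hB i
        rcases Finset.mem_insert.mp hB with rfl | hB
        · exact hconnStar i
        · exact hconn B (hnotQsub hB) i
      exact IH P' hcard' hP'part hconn'

/-- The packaged Nash-Williams / Tutte theorem. -/
theorem main {k : ℕ} (hk : 1 ≤ k) [Nonempty V] (G : SimpleGraph V)
    (hG : ∀ S : Finset (Sym2 V), S.card < 2*k → (G.deleteEdges ↑S).Connected) :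
    ∃ H : Fin k → SimpleGraph V,
      (∀ i, H i ≤ G ∧ (H i).IsTree) ∧
      (∀ i j, i ≠ j → Disjoint (H i).edgeSet (H j).edgeSet) := by
  obtain ⟨F₀, hmax⟩ := exists_max (k := k) G
  -- initial partition into singletons
  set P₀ : Finset (Finset V) := Finset.univ.image (fun v : V => {v}) with hP₀
  have hP₀part : IsPart P₀ := by
    refine ⟨?_, ?_, ?_⟩
    · intro B hB
      obtain ⟨v, -, rfl⟩ := Finset.mem_image.mp hB
      exact ⟨v, Finset.mem_singleton_self v⟩
    · intro v
      exact ⟨{v}, Finset.mem_image.mpr ⟨v, Finset.mem_univ _, rfl⟩, Finset.mem_singleton_self v⟩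
    · intro B hB B' hB' hne
      obtain ⟨v, -, rfl⟩ := Finset.mem_image.mp hB
      obtain ⟨w, -, rfl⟩ := Finset.mem_image.mp hB'
      rw [Finset.disjoint_left]
      intro z hz hz'
      rw [Finset.mem_singleton] at hz hz'
      exact hne (by rw [← hz, ← hz'])
  have hP₀conn : ∀ B ∈ P₀, ∀ i, conn B (F₀ i) := by
    intro B hB i u hu v hv
    obtain ⟨w, -, rfl⟩ := Finset.mem_image.mp hB
    rw [Finset.mem_singleton] at hu hv
    rw [hu, hv]
  obtain ⟨P, hPpart, hPconn, hPterm⟩ := process hmax P₀.card P₀ le_rfl hP₀part hP₀conn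
  have hcard1 : P.card = 1 := terminal_card_one hk hG hmax.1 hPpart hPconn hPterm
  obtain ⟨B, hB⟩ := Finset.card_eq_one.mp hcard1
  have hBuniv : B = Finset.univ := by
    refine Finset.eq_univ_iff_forall.mpr fun v => ?_
    obtain ⟨C, hC, hvC⟩ := hPpart.2.1 v
    rw [hB, Finset.mem_singleton] at hC
    exact hC ▸ hvC
  have hconnuniv : ∀ i, (F₀ i).Connected := by
    intro i
    rw [connected_iff]
    refine ⟨fun u v => ?_, inferInstance⟩
    have := hPconn B (by rw [hB]; exact Finset.mem_singleton_self _) i u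
      (by rw [hBuniv]; exact Finset.mem_univ _) v (by rw [hBuniv]; exact Finset.mem_univ _)
    rw [hBuniv] at this
    rw [← restrict_univ (F₀ i), ← Finset.coe_univ]
    exact this
  exact ⟨F₀, fun i => ⟨(hmax.1.1 i).1, ⟨hconnuniv i, (hmax.1.1 i).2⟩⟩,
    fun i j hij => hmax.1.2 i j hij⟩

end Partition
end TP

/-- A graph `G` is `k`-edge-connected if it remains connected after the deletion of
any fewer than `k` edges. -/
def IsKEdgeConnected {V : Type} (G : SimpleGraph V) (k : ℕ) : Prop :=
  ∀ S : Finset (Sym2 V), S.card < k → (G.deleteEdges ↑S).Connected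

/-- Nash-Williams; Tutte: every `2k`-edge-connected finite graph contains `k`
pairwise edge-disjoint spanning trees. -/
theorem edge_disjoint_spanning_trees {V : Type} [Fintype V] (k : ℕ)
    (G : SimpleGraph V) (hG : IsKEdgeConnected G (2 * k)) :
    ∃ H : Fin k → SimpleGraph V,
      (∀ i, H i ≤ G ∧ (H i).IsTree) ∧
      (∀ i j, i ≠ j → Disjoint (H i).edgeSet (H j).edgeSet) := by
  rcases Nat.eq_zero_or_pos k with rfl | hk
  · exact ⟨fun i => i.elim0, fun i => i.elim0, fun i j _ => i.elim0⟩
  · letI := Classical.decEq V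
    have hconn : (G.deleteEdges ↑(∅ : Finset (Sym2 V))).Connected :=
      hG ∅ (by simp; omega)
    haveI : Nonempty V := hconn.nonempty
    exact TP.main hk G hG
end

section
/- If G is a 2k-regular finite multigraph, then G admits a decomposition into 2-factors, i.e., its edge set can be partitioned into k sets each of which induces a 2-regular spanning subgraph of G. -/
set_option linter.unusedSectionVars false


open Finset

section Aux
variable {V : Type} [Fintype V] [DecidableEq V]

lemma sum_ite_eq_one_of_bij (f : V → V) (hf : Function.Bijective f) (v : V) :
    (∑ u, if f u = v then 1 else 0) = 1 := by
  obtain ⟨u₀, hu₀⟩ := hf.surjective v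
  rw [Finset.sum_eq_single u₀]
  · simp [hu₀]
  · intro b _ hb
    have : f b ≠ v := fun h => hb (hf.injective (h.trans hu₀.symm))
    simp [this]
  · simp

lemma addEdge_rowcol (p q : V) (D' : V → V → ℕ) :
    (∑ u, (D' p u + if p = p ∧ u = q then 1 else 0) = (∑ u, D' p u) + 1) ∧
    (∀ r, r ≠ p → ∑ u, (D' r u + if r = p ∧ u = q then 1 else 0) = ∑ u, D' r u) ∧
    (∑ u, (D' u q + if u = p ∧ q = q then 1 else 0) = (∑ u, D' u q) + 1) ∧
    (∀ c, c ≠ q → ∑ u, (D' u c + if u = p ∧ c = q then 1 else 0) = ∑ u, D' u c) := by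
  refine ⟨?_, ?_, ?_, ?_⟩
  · rw [Finset.sum_add_distrib]; simp
  · intro r hr; rw [Finset.sum_add_distrib]; simp [hr]
  · rw [Finset.sum_add_distrib]; simp
  · intro c hc; rw [Finset.sum_add_distrib]; simp [hc]

lemma remove_edge (m : V → V → ℕ) (hsymm : ∀ u v, m u v = m v u)
    (hloop : ∀ v, m v v = 0) (a b : V) (hab : a ≠ b) (h1 : 1 ≤ m a b) :
    ∃ m' : V → V → ℕ,
      (∀ u v, m u v = m' u v + (if (u = a ∧ v = b) ∨ (u = b ∧ v = a) then 1 else 0)) ∧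
      (∀ u v, m' u v = m' v u) ∧ (∀ v, m' v v = 0) ∧
      ((∑ u, ∑ v, m' u v) + 2 = ∑ u, ∑ v, m u v) ∧
      ((∑ u, m' a u) + 1 = ∑ u, m a u) ∧
      ((∑ u, m' b u) + 1 = ∑ u, m b u) ∧
      (∀ v, v ≠ a → v ≠ b → (∑ u, m' v u) = ∑ u, m v u) := by
  set e : V → V → ℕ := fun u v => if (u = a ∧ v = b) ∨ (u = b ∧ v = a) then 1 else 0 with he
  have hle : ∀ u v, e u v ≤ m u v := by
    intro u v
    simp only [he]
    split
    · rename_i h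
      rcases h with ⟨h1', h2'⟩ | ⟨h1', h2'⟩ <;> subst h1' <;> subst h2'
      · exact h1
      · rw [hsymm]; exact h1
    · exact Nat.zero_le _
  have hrowsum : ∀ u, ∑ v, e u v = (if u = a then 1 else 0) + (if u = b then 1 else 0) := by
    intro u
    by_cases hu : u = a
    · subst hu
      have h' : ∀ v, e u v = if v = b then 1 else 0 := by
        intro v; simp only [he]
        by_cases hv : v = b
        · simp [hv]
        · rw [if_neg, if_neg hv]
          rintro (⟨_, h2'⟩ | ⟨h1', _⟩) <;> simp_all
      simp [h', hab]
    · by_cases hu' : u = b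
      · subst hu'
        have h' : ∀ v, e u v = if v = a then 1 else 0 := by
          intro v; simp only [he]
          by_cases hv : v = a
          · simp [hv, hab.symm]
          · rw [if_neg, if_neg hv]
            rintro (⟨h1', _⟩ | ⟨_, h2'⟩) <;> simp_all
        simp [h', hu]
      · have h' : ∀ v, e u v = 0 := by
          intro v; simp only [he]; rw [if_neg]
          rintro (⟨h1', _⟩ | ⟨h1', _⟩) <;> simp_all
        simp [h', hu, hu']
  have hrow : ∀ u, ∑ v, (m u v - e u v) = ∑ v, m u v - ∑ v, e u v :=
    fun u => Finset.sum_tsub_distrib _ (fun v _ => hle u v)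
  have hrowle : ∀ u, ∑ v, e u v ≤ ∑ v, m u v :=
    fun u => Finset.sum_le_sum (fun v _ => hle u v)
  refine ⟨fun u v => m u v - e u v, ?_, ?_, ?_, ?_, ?_, ?_, ?_⟩
  · intro u v; have := hle u v; simp only [he] at this ⊢; omega
  · intro u v
    have h2 : e u v = e v u := by
      simp only [he]
      by_cases h : u = a ∧ v = b ∨ u = b ∧ v = a
      · rw [if_pos h, if_pos (by tauto)]
      · rw [if_neg h, if_neg (by tauto)]
    simp only; rw [hsymm u v, h2]
  · intro v
    have h0 : e v v = 0 := by
      simp only [he]; rw [if_neg]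
      rintro (⟨h1', h2'⟩ | ⟨h1', h2'⟩) <;> simp_all
    simp only [h0, hloop, Nat.sub_zero]
  · have hesum : ∑ u, ∑ v, e u v = 2 := by
      rw [Finset.sum_congr rfl (fun u _ => hrowsum u), Finset.sum_add_distrib]
      simp
    have h2le : ∑ u, ∑ v, e u v ≤ ∑ u, ∑ v, m u v :=
      Finset.sum_le_sum (fun u _ => hrowle u)
    rw [Finset.sum_congr rfl (fun u _ => hrow u),
      Finset.sum_tsub_distrib _ (fun u _ => hrowle u), hesum] at *
    omega
  · have := hrowle a; have h' := hrowsum a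
    rw [hrow a, hrowsum a, if_pos rfl, if_neg hab] at *
    omega
  · have := hrowle b; have h' := hrowsum b
    rw [hrow b, hrowsum b, if_pos rfl, if_neg hab.symm] at *
    omega
  · intro v hva hvb
    rw [hrow v, hrowsum v, if_neg hva, if_neg hvb]
    omega

end Aux

section Orient
variable {V : Type} [Fintype V] [DecidableEq V]

lemma split_e (a b : V) (hab : a ≠ b) (u v : V) :
    (if u = a ∧ v = b then 1 else 0) + (if v = a ∧ u = b then 1 else 0)
      = if (u = a ∧ v = b) ∨ (u = b ∧ v = a) then (1:ℕ) else 0 := by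
  by_cases h1 : u = a ∧ v = b
  · have h2 : ¬(v = a ∧ u = b) := by
      rintro ⟨r1, r2⟩; exact hab (h1.1.symm.trans r2)
    rw [if_pos h1, if_neg h2, if_pos (Or.inl h1)]
  · by_cases h2 : v = a ∧ u = b
    · have h3 : (u = a ∧ v = b) ∨ (u = b ∧ v = a) := Or.inr ⟨h2.2, h2.1⟩
      rw [if_neg h1, if_pos h2, if_pos h3]
    · have h3 : ¬((u = a ∧ v = b) ∨ (u = b ∧ v = a)) := by tauto
      rw [if_neg h1, if_neg h2, if_neg h3]

lemma orient_aux (n : ℕ) : ∀ m : V → V → ℕ, (∑ u, ∑ v, m u v) = n →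
    (∀ u v, m u v = m v u) → (∀ v, m v v = 0) →
    (((∀ v, Even (∑ u, m v u)) → ∃ D : V → V → ℕ,
        (∀ u v, D u v + D v u = m u v) ∧ (∀ v, ∑ u, D v u = ∑ u, D u v)) ∧
     (∀ x y : V, x ≠ y → Odd (∑ u, m x u) → Odd (∑ u, m y u) →
        (∀ v, v ≠ x → v ≠ y → Even (∑ u, m v u)) →
        ∃ D : V → V → ℕ, (∀ u v, D u v + D v u = m u v) ∧
          (∑ u, D x u = (∑ u, D u x) + 1) ∧ (∑ u, D u y = (∑ u, D y u) + 1) ∧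
          (∀ v, v ≠ x → v ≠ y → ∑ u, D v u = ∑ u, D u v))) := by
  induction n using Nat.strong_induction_on with
  | _ n ih =>
  intro m hn hsymm hloop
  constructor
  · -- even case
    intro heven
    by_cases h0 : ∀ u v, m u v = 0
    · exact ⟨fun _ _ => 0, fun u v => by simp [h0], fun v => rfl⟩
    · push_neg at h0
      obtain ⟨a, b, hab0⟩ := h0
      have hab : a ≠ b := by rintro rfl; exact hab0 (hloop a)
      have h1 : 1 ≤ m a b := Nat.one_le_iff_ne_zero.mpr hab0
      obtain ⟨m', hm, hsymm', hloop', htot, hda, hdb, hdo⟩ :=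
        remove_edge m hsymm hloop a b hab h1
      have hlt : (∑ u, ∑ v, m' u v) < n := by omega
      have hoa : Odd (∑ u, m' a u) := by
        rw [Nat.odd_iff]; have := (heven a); rw [Nat.even_iff] at this; omega
      have hob' : Odd (∑ u, m' b u) := by
        rw [Nat.odd_iff]; have := (heven b); rw [Nat.even_iff] at this; omega
      have hoth : ∀ v, v ≠ a → v ≠ b → Even (∑ u, m' v u) := by
        intro v hva hvb; rw [hdo v hva hvb]; exact heven v
      obtain ⟨D', hD'e, hsa, hsb, hbal⟩ :=
        (ih _ hlt m' rfl hsymm' hloop').2 a b hab hoa hob' hoth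
      obtain ⟨hr1, hr2, hc1, hc2⟩ := addEdge_rowcol b a D'
      refine ⟨fun u v => D' u v + (if u = b ∧ v = a then 1 else 0), ?_, ?_⟩
      · intro u v
        dsimp only
        have h2 := split_e b a hab.symm u v
        have h3 := hm u v
        have h4 := hD'e u v
        have h5 : (if (u = b ∧ v = a) ∨ (u = a ∧ v = b) then (1:ℕ) else 0)
            = if (u = a ∧ v = b) ∨ (u = b ∧ v = a) then 1 else 0 :=
          if_congr or_comm rfl rfl
        omega
      · intro v
        dsimp only
        by_cases hvb : v = b
        · subst hvb
          rw [hr1, hc2 _ (Ne.symm hab)]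
          omega
        · by_cases hva : v = a
          · subst hva
            rw [hr2 _ hab, hc1]
            omega
          · rw [hr2 _ hvb, hc2 _ hva]
            exact hbal v hva hvb
  · -- odd case
    intro x y hxy hox hoy hev
    have hx1 : ∃ z, m x z ≠ 0 := by
      by_contra h
      push_neg at h
      rw [Nat.odd_iff, Finset.sum_eq_zero (fun u _ => h u)] at hox
      omega
    obtain ⟨z, hz0⟩ := hx1
    have hxz : x ≠ z := by rintro rfl; exact hz0 (hloop x)
    have h1 : 1 ≤ m x z := Nat.one_le_iff_ne_zero.mpr hz0
    obtain ⟨m', hm, hsymm', hloop', htot, hdx, hdz, hdo⟩ :=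
      remove_edge m hsymm hloop x z hxz h1
    have hlt : (∑ u, ∑ v, m' u v) < n := by omega
    by_cases hzy : z = y
    · subst hzy
      -- removed edge x–y; all degrees even now
      have heven : ∀ v, Even (∑ u, m' v u) := by
        intro v
        by_cases hvx : v = x
        · subst hvx; rw [Nat.even_iff]; rw [Nat.odd_iff] at hox; omega
        · by_cases hvz : v = z
          · subst hvz; rw [Nat.even_iff]; rw [Nat.odd_iff] at hoy; omega
          · rw [hdo v hvx hvz]; exact hev v hvx hvz
      obtain ⟨D', hD'e, hbal⟩ := (ih _ hlt m' rfl hsymm' hloop').1 heven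
      obtain ⟨hr1, hr2, hc1, hc2⟩ := addEdge_rowcol x z D'
      refine ⟨fun u v => D' u v + (if u = x ∧ v = z then 1 else 0), ?_, ?_, ?_, ?_⟩
      · intro u v
        dsimp only
        have h2 := split_e x z hxz u v
        have h3 := hm u v
        have h4 := hD'e u v
        omega
      · dsimp only
        rw [hr1, hc2 _ hxz]
        have := hbal x; omega
      · dsimp only
        rw [hc1, hr2 _ (Ne.symm hxz)]
        have := hbal z; omega
      · intro v hvx hvz
        dsimp only
        rw [hr2 _ hvx, hc2 _ hvz]
        exact hbal v
    · -- z ≠ y : removed edge x–z, now z and y are odd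
      have hzx : z ≠ x := Ne.symm hxz
      have hoz : Odd (∑ u, m' z u) := by
        rw [Nat.odd_iff]
        have := hev z hzx hzy; rw [Nat.even_iff] at this; omega
      have hoy' : Odd (∑ u, m' y u) := by
        rw [hdo y (Ne.symm hxy) (fun h => hzy h.symm)]; exact hoy
      have hoth : ∀ v, v ≠ z → v ≠ y → Even (∑ u, m' v u) := by
        intro v hvz hvy
        by_cases hvx : v = x
        · subst hvx; rw [Nat.even_iff]; rw [Nat.odd_iff] at hox; omega
        · rw [hdo v hvx hvz]; exact hev v hvx hvy
      obtain ⟨D'', hD''e, hsz, hsy, hbal⟩ :=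
        (ih _ hlt m' rfl hsymm' hloop').2 z y hzy hoz hoy' hoth
      obtain ⟨hr1, hr2, hc1, hc2⟩ := addEdge_rowcol x z D''
      refine ⟨fun u v => D'' u v + (if u = x ∧ v = z then 1 else 0), ?_, ?_, ?_, ?_⟩
      · intro u v
        dsimp only
        have h2 := split_e x z hxz u v
        have h3 := hm u v
        have h4 := hD''e u v
        omega
      · dsimp only
        rw [hr1, hc2 _ hxz]
        have := hbal x (Ne.symm hzx) hxy; omega
      · dsimp only
        rw [hc2 _ (fun h => hzy h.symm), hr2 _ (Ne.symm hxy)]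
        omega
      · intro v hvx hvy
        dsimp only
        by_cases hvz : v = z
        · subst hvz
          rw [hr2 _ hzx, hc1]
          omega
        · rw [hr2 _ hvx, hc2 _ hvz]
          exact hbal v hvz hvy

end Orient

section Matching
variable {V : Type} [Fintype V] [DecidableEq V]

lemma matching_decomp (k : ℕ) : ∀ D : V → V → ℕ,
    (∀ v, ∑ u, D v u = k) → (∀ v, ∑ u, D u v = k) →
    ∃ f : Fin k → V → V, (∀ i, Function.Bijective (f i)) ∧
      ∀ u v, (∑ i, if f i u = v then 1 else 0) = D u v := by
  induction k with
  | zero =>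
    intro D hout _
    refine ⟨fun i => absurd i.2 (by omega), fun i => absurd i.2 (by omega), ?_⟩
    intro u v
    have h0 : D u v = 0 := by
      have := hout u
      have h1 : D u v ≤ ∑ w, D u w := Finset.single_le_sum (fun w _ => Nat.zero_le _) (mem_univ v)
      omega
    simp [h0]
  | succ k ihk =>
    intro D hout hin
    set t : V → Finset V := fun v => univ.filter (fun w => 1 ≤ D v w) with ht
    have hall : ∀ s : Finset V, s.card ≤ (s.biUnion t).card := by
      intro s
      have key : (k + 1) * s.card ≤ (k + 1) * (s.biUnion t).card := by
        have h1 : (k + 1) * s.card = ∑ v ∈ s, ∑ u, D v u := by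
          rw [Finset.sum_congr rfl (fun v _ => hout v)]
          simp [Nat.mul_comm]
        have h2 : ∀ v ∈ s, (∑ u, D v u) = ∑ u ∈ s.biUnion t, D v u := by
          intro v hv
          rw [eq_comm]
          apply Finset.sum_subset (Finset.subset_univ _)
          intro w _ hw
          by_contra hc
          exact hw (Finset.mem_biUnion.mpr ⟨v, hv, by simp [ht]; omega⟩)
        rw [h1, Finset.sum_congr rfl h2, Finset.sum_comm]
        calc ∑ u ∈ s.biUnion t, ∑ v ∈ s, D v u
            ≤ ∑ u ∈ s.biUnion t, ∑ v, D v u :=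
              Finset.sum_le_sum (fun u _ =>
                Finset.sum_le_sum_of_subset (Finset.subset_univ _))
          _ = (k + 1) * (s.biUnion t).card := by
              rw [Finset.sum_congr rfl (fun u _ => hin u)]
              simp [Nat.mul_comm]
      exact Nat.le_of_mul_le_mul_left key (Nat.succ_pos k)
    obtain ⟨f₀, hinj, hmem⟩ := (Finset.all_card_le_biUnion_card_iff_exists_injective t).mp hall
    have hbij : Function.Bijective f₀ := Finite.injective_iff_bijective.mp hinj
    have hf₀ : ∀ v, 1 ≤ D v (f₀ v) := by
      intro v
      have := hmem v
      simp [ht] at this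
      omega
    set D' : V → V → ℕ := fun u v => D u v - (if f₀ u = v then 1 else 0) with hD'
    have hle : ∀ u v, (if f₀ u = v then 1 else 0) ≤ D u v := by
      intro u v
      split
      · rename_i h; rw [← h]; exact hf₀ u
      · exact Nat.zero_le _
    have hout' : ∀ v, ∑ u, D' v u = k := by
      intro v
      rw [hD']
      dsimp only
      rw [Finset.sum_tsub_distrib _ (fun u _ => hle v u)]
      have h1 : (∑ u, if f₀ v = u then 1 else 0) = 1 := by simp
      rw [h1, hout v]
      omega
    have hin' : ∀ v, ∑ u, D' u v = k := by
      intro v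
      rw [hD']
      dsimp only
      rw [Finset.sum_tsub_distrib _ (fun u _ => hle u v)]
      rw [sum_ite_eq_one_of_bij f₀ hbij v, hin v]
      omega
    obtain ⟨f', hbij', hsum'⟩ := ihk D' hout' hin'
    refine ⟨Fin.cons f₀ f', ?_, ?_⟩
    · intro i
      refine Fin.cases ?_ ?_ i
      · rw [Fin.cons_zero]; exact hbij
      · intro j; rw [Fin.cons_succ]; exact hbij' j
    · intro u v
      rw [Fin.sum_univ_succ]
      simp only [Fin.cons_zero, Fin.cons_succ]
      rw [hsum' u v]
      have := hle u v
      rw [hD']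
      dsimp only
      omega

end Matching



/-- Petersen: every `2k`-regular finite multigraph admits a decomposition into `k`
`2`-factors: its edge multiset can be partitioned into `k` spanning `2`-regular
sub-multigraphs. -/
theorem petersen_two_factorization {V : Type} [Fintype V]
    (k : ℕ) (G : Multigraph V) (hreg : ∀ v, G.degree v = 2 * k) :
    ∃ F : Fin k → Multigraph V,
      (∀ u w, (∑ i, (F i).mult u w) = G.mult u w) ∧
      (∀ i v, (F i).degree v = 2) := by
  classical
  obtain ⟨D, hDe, hbal⟩ :=
    (orient_aux (∑ u, ∑ v, G.mult u v) G.mult rfl G.symm G.loopless).1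
      (fun v => by
        rw [show (∑ u, G.mult v u) = G.degree v from rfl, hreg]
        exact even_two_mul k)
  have hDvv : ∀ v, D v v = 0 := fun v => by
    have h1 := hDe v v
    have h2 := G.loopless v
    omega
  have hout : ∀ v, ∑ u, D v u = k := by
    intro v
    have h1 : ∑ u, (D v u + D u v) = 2 * k := by
      rw [Finset.sum_congr rfl (fun u _ => hDe v u)]
      rw [show (∑ u, G.mult v u) = G.degree v from rfl, hreg]
    rw [Finset.sum_add_distrib] at h1
    have h2 := hbal v
    omega
  have hin : ∀ v, ∑ u, D u v = k := fun v => by rw [← hbal v]; exact hout v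
  obtain ⟨f, hbij, hmatch⟩ := matching_decomp k D hout hin
  have hne : ∀ i v, f i v ≠ v := by
    intro i v hiv
    have h0 := hmatch v v
    rw [hDvv v] at h0
    have h1 := Finset.sum_eq_zero_iff.mp h0 i (Finset.mem_univ i)
    rw [if_pos hiv] at h1
    omega
  refine ⟨fun i => ⟨fun u w => (if f i u = w then 1 else 0) + (if f i w = u then 1 else 0),
      fun u w => Nat.add_comm _ _, fun v => by simp [hne i v]⟩, ?_, ?_⟩
  · intro u w
    simp only
    rw [Finset.sum_add_distrib, hmatch u w, hmatch w u, hDe u w]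
  · intro i v
    show (∑ u, ((if f i v = u then 1 else 0) + (if f i u = v then 1 else 0))) = 2
    rw [Finset.sum_add_distrib, sum_ite_eq_one_of_bij (f i) (hbij i) v]
    have h1 : (∑ u, if f i v = u then 1 else 0) = 1 := by simp
    omega
end

section
/- A connected finite simple graph G admits a decomposition into paths of length 2 if and only if G has an even number of edges. -/
open SimpleGraph

/-- `D` is a decomposition of `G` into copies of `T`: a set of pairwise edge-disjoint
subgraphs of `G`, each isomorphic to `T`, whose union is `G`. -/
def IsDecompInto {V W : Type} (G : SimpleGraph V) (T : SimpleGraph W)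
    (D : Set G.Subgraph) : Prop :=
  (∀ H ∈ D, Nonempty (H.coe ≃g T)) ∧
  (∀ H ∈ D, ∀ K ∈ D, H ≠ K → Disjoint H.edgeSet K.edgeSet) ∧
  (⋃ H ∈ D, H.edgeSet) = G.edgeSet

section Aux

variable {V : Type}

variable {V : Type}

section helpers

private lemma dist_split [DecidableEq V] {G : SimpleGraph V} {r x y : V} (p : G.Walk r x)
    (hp : p.length = G.dist r x) (hy : y ∈ p.support) :
    G.dist r y + G.dist y x ≤ G.dist r x := by
  have h1 := SimpleGraph.dist_le (p.takeUntil y hy)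
  have h2 := SimpleGraph.dist_le (p.dropUntil y hy)
  have h3 : (p.takeUntil y hy).length + (p.dropUntil y hy).length = p.length := by
    rw [← SimpleGraph.Walk.length_append, p.take_spec hy]
  omega

private lemma not_on_shortest [DecidableEq V] {G : SimpleGraph V} {r x y : V} (p : G.Walk r x)
    (hp : p.length = G.dist r x) (hle : G.dist r x ≤ G.dist r y)
    (hreach : G.Reachable y x) (hne : x ≠ y) : y ∉ p.support := by
  intro hy
  have h1 := dist_split p hp hy
  have h2 := hreach.pos_dist_of_ne (Ne.symm hne)
  omega

private lemma walk_confine {G : SimpleGraph V} {u v : V}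
    (hu : ∀ c, G.Adj u c → c = v) (hv : ∀ c, G.Adj v c → c = u) :
    ∀ {s x : V} (_ : G.Walk s x), s = u ∨ s = v → x = u ∨ x = v := by
  intro s x w
  induction w with
  | nil => exact fun h => h
  | cons h p ih =>
    intro hs
    apply ih
    rcases hs with rfl | rfl
    · exact Or.inr (hu _ h)
    · exact Or.inl (hv _ h)

private def Good (G : SimpleGraph V) (r : V) : Prop := ∀ x ∈ G.support, G.Reachable r x

private lemma good_of_almost {G : SimpleGraph V} {r c : V}
    (h : ∀ x ∈ G.support, x ≠ c → G.Reachable r x) : Good G r := by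
  intro x hx
  by_cases hxc : x = c
  · subst hxc
    obtain ⟨y, hy⟩ := hx
    exact (h y ⟨x, hy.symm⟩ hy.ne').trans hy.symm.reachable
  · exact h x hx hxc
end helpers

private lemma exists_cherry [Fintype V] (G : SimpleGraph V) {r : V}
    (hG : Good G r) (h2 : 2 ≤ G.edgeSet.ncard) :
    ∃ c a b : V, a ≠ b ∧ G.Adj c a ∧ G.Adj c b ∧
      Good (G.deleteEdges {s(c,a), s(c,b)}) r := by
  classical
  have hEne : G.edgeSet.Nonempty := by
    rcases Set.eq_empty_or_nonempty G.edgeSet with h | h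
    · rw [h] at h2; simp at h2
    · exact h
  obtain ⟨e0, he0⟩ := hEne
  obtain ⟨x0, y0, hxy0⟩ : ∃ x y : V, G.Adj x y := by
    induction e0 using Sym2.ind with
    | _ x y => exact ⟨x, y, he0⟩
  have hsupne : G.support.Nonempty := ⟨x0, y0, hxy0⟩
  obtain ⟨v, hvs, hvmax⟩ := Set.exists_max_image G.support (fun x => G.dist r x)
    (Set.toFinite _) hsupne
  by_cases hA : ∃ w ∈ G.support, G.dist r w = G.dist r v ∧ ∃ a b, G.Adj w a ∧ G.Adj w b ∧ a ≠ b
  · obtain ⟨w, hws, hwd, a, b, hwa, hwb, hab⟩ := hA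
    refine ⟨w, a, b, hab, hwa, hwb, ?_⟩
    apply good_of_almost (c := w)
    intro x hx hxw
    have hxs : x ∈ G.support := support_mono (G.deleteEdges_le _) hx
    obtain ⟨p, hp, hpl⟩ := (hG x hxs).exists_path_of_dist
    have hwp : w ∉ p.support :=
      not_on_shortest p hpl (hwd ▸ hvmax x hxs) ((hG w hws).symm.trans (hG x hxs)) hxw
    have hpe : ∀ e ∈ p.edges, e ∉ ({s(w,a), s(w,b)} : Set (Sym2 V)) := by
      intro e he hes
      rcases hes with rfl | rfl
      · exact hwp (p.fst_mem_support_of_mem_edges he)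
      · exact hwp (p.fst_mem_support_of_mem_edges he)
    exact ⟨p.toDeleteEdges _ hpe⟩
  · push_neg at hA
    obtain ⟨u, hvu⟩ := hvs
    have hvuniq : ∀ c, G.Adj v c → c = u := fun c hc =>
      hA v ⟨u, hvu⟩ rfl c u hc hvu
    have hworw : ∃ w, G.Adj u w ∧ w ≠ v := by
      by_contra hno
      push_neg at hno
      have hsub : G.edgeSet ⊆ {s(u,v)} := by
        intro e he
        induction e using Sym2.ind with
        | _ x y =>
          have hadj : G.Adj x y := he
          have hru : G.Reachable r u := hG u ⟨v, hvu.symm⟩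
          have hx : x = u ∨ x = v :=
            walk_confine hno hvuniq (hru.symm.trans (hG x ⟨y, hadj⟩)).some (Or.inl rfl)
          have hy : y = u ∨ y = v :=
            walk_confine hno hvuniq (hru.symm.trans (hG y ⟨x, hadj.symm⟩)).some (Or.inl rfl)
          rcases hx with rfl | rfl <;> rcases hy with rfl | rfl
          · exact absurd rfl hadj.ne
          · rfl
          · exact Set.mem_singleton_iff.mpr (Sym2.eq_swap)
          · exact absurd rfl hadj.ne
      have hle := Set.ncard_le_ncard hsub (Set.finite_singleton _)
      rw [Set.ncard_singleton] at hle
      omega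
    obtain ⟨w0, huw0, hw0v⟩ := hworw
    have hus : u ∈ G.support := ⟨v, hvu.symm⟩
    have hdu_lt : G.dist r u < G.dist r v := by
      rcases lt_or_eq_of_le (hvmax u hus) with h | h
      · exact h
      · exact absurd (hA u hus h w0 v huw0 hvu.symm) hw0v
    have hdu : G.dist r v = G.dist r u + 1 := by
      obtain ⟨q, hq⟩ := (hG u hus).exists_walk_length_eq_dist
      have := SimpleGraph.dist_le (q.append (SimpleGraph.Walk.cons hvu.symm SimpleGraph.Walk.nil))
      rw [SimpleGraph.Walk.length_append, SimpleGraph.Walk.length_cons,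
        SimpleGraph.Walk.length_nil, hq] at this
      omega
    -- x ≠ v in the deleted graph, generic over chosen second edge
    have hxv_gen : ∀ (f : Sym2 V) (x : V),
        x ∈ (G.deleteEdges ({s(u,v), f} : Set (Sym2 V))).support → x ≠ v := by
      rintro f x hx rfl
      obtain ⟨y, hy⟩ := hx
      have hyu : y = u := hvuniq y ((G.deleteEdges_le _) hy)
      subst hyu
      change (G.deleteEdges _).Adj x y at hy
      rw [SimpleGraph.deleteEdges_adj] at hy
      exact hy.2 (Or.inl Sym2.eq_swap)
    by_cases hB1 : ∃ w, G.Adj u w ∧ w ≠ v ∧ G.dist r w = G.dist r v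
    · obtain ⟨w, huw, hwv, hwd⟩ := hB1
      refine ⟨u, v, w, Ne.symm hwv, hvu.symm, huw, ?_⟩
      apply good_of_almost (c := u)
      intro x hx hxu
      have hxs : x ∈ G.support := support_mono (G.deleteEdges_le _) hx
      have hxv : x ≠ v := hxv_gen _ x hx
      have hws : w ∈ G.support := ⟨u, huw.symm⟩
      have hwuniq : ∀ c, G.Adj w c → c = u := fun c hc =>
        hA w hws hwd c u hc huw.symm
      have hxw : x ≠ w := by
        rintro rfl
        obtain ⟨y, hy⟩ := hx
        have hyu : y = u := hwuniq y ((G.deleteEdges_le _) hy)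
        subst hyu
        change (G.deleteEdges _).Adj x y at hy
        rw [SimpleGraph.deleteEdges_adj] at hy
        exact hy.2 (Or.inr Sym2.eq_swap)
      obtain ⟨p, hp, hpl⟩ := (hG x hxs).exists_path_of_dist
      have hvp : v ∉ p.support :=
        not_on_shortest p hpl (hvmax x hxs) ((hG v ⟨u, hvu⟩).symm.trans (hG x hxs)) hxv
      have hwp : w ∉ p.support :=
        not_on_shortest p hpl (hwd ▸ hvmax x hxs) ((hG w hws).symm.trans (hG x hxs)) hxw
      have hpe : ∀ e ∈ p.edges, e ∉ ({s(u,v), s(u,w)} : Set (Sym2 V)) := by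
        intro e he hes
        rcases hes with rfl | rfl
        · exact hvp (p.snd_mem_support_of_mem_edges he)
        · exact hwp (p.snd_mem_support_of_mem_edges he)
      exact ⟨p.toDeleteEdges _ hpe⟩
    · push_neg at hB1
      refine ⟨u, v, w0, Ne.symm hw0v, hvu.symm, huw0, ?_⟩
      apply good_of_almost (c := u)
      intro x hx hxu
      have hxs : x ∈ G.support := support_mono (G.deleteEdges_le _) hx
      have hxv : x ≠ v := hxv_gen _ x hx
      obtain ⟨p, hp, hpl⟩ := (hG x hxs).exists_path_of_dist
      have hvp : v ∉ p.support :=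
        not_on_shortest p hpl (hvmax x hxs) ((hG v ⟨u, hvu⟩).symm.trans (hG x hxs)) hxv
      have hup : u ∉ p.support := by
        intro hup
        have hsplit := dist_split p hpl hup
        have hxle : G.dist r x ≤ G.dist r v := hvmax x hxs
        have hpos := ((hG u hus).symm.trans (hG x hxs)).pos_dist_of_ne (Ne.symm hxu)
        have hux1 : G.dist u x = 1 := by omega
        have hadjux : G.Adj u x := SimpleGraph.dist_eq_one_iff_adj.mp hux1
        have hdx : G.dist r x = G.dist r v := by omega
        exact hB1 x hadjux hxv hdx
      have hpe : ∀ e ∈ p.edges, e ∉ ({s(u,v), s(u,w0)} : Set (Sym2 V)) := by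
        intro e he hes
        rcases hes with rfl | rfl
        · exact hvp (p.snd_mem_support_of_mem_edges he)
        · exact hup (p.fst_mem_support_of_mem_edges he)
      exact ⟨p.toDeleteEdges _ hpe⟩

private lemma key [Fintype V] : ∀ (n : ℕ) (G : SimpleGraph V) (r : V), Good G r →
    G.edgeSet.ncard = 2 * n →
    ∃ T : Finset (V × V × V),
      (∀ t ∈ T, t.2.1 ≠ t.2.2 ∧ G.Adj t.1 t.2.1 ∧ G.Adj t.1 t.2.2) ∧
      (∀ t ∈ T, ∀ t' ∈ T, t ≠ t' →
        Disjoint ({s(t.1,t.2.1), s(t.1,t.2.2)} : Set (Sym2 V))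
          ({s(t'.1,t'.2.1), s(t'.1,t'.2.2)} : Set (Sym2 V))) ∧
      (⋃ t ∈ (T : Set (V × V × V)), ({s(t.1,t.2.1), s(t.1,t.2.2)} : Set (Sym2 V))) = G.edgeSet := by
  classical
  intro n
  induction n with
  | zero =>
    intro G r _ h0
    have hE : G.edgeSet = ∅ := (Set.ncard_eq_zero (Set.toFinite _)).mp (by omega)
    exact ⟨∅, by simp, by simp, by simp [hE]⟩
  | succ n ih =>
    intro G r hGood hcard
    have h2 : 2 ≤ G.edgeSet.ncard := by omega
    obtain ⟨c, a, b, hab, hca, hcb, hGood'⟩ := exists_cherry G hGood h2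
    set s : Set (Sym2 V) := {s(c,a), s(c,b)} with hs
    have he1 : s(c,a) ∈ G.edgeSet := hca
    have he2 : s(c,b) ∈ G.edgeSet := hcb
    have hne12 : s(c,a) ≠ s(c,b) := by
      intro h
      rcases Sym2.eq_iff.mp h with ⟨-, h2⟩ | ⟨-, h2⟩
      · exact hab h2
      · exact hca.ne' h2
    have hssub : s ⊆ G.edgeSet := by
      rintro e (rfl | rfl)
      exacts [he1, he2]
    have hsE : (G.deleteEdges s).edgeSet = G.edgeSet \ s := edgeSet_deleteEdges s
    have hcard' : (G.deleteEdges s).edgeSet.ncard = 2 * n := by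
      rw [hsE, Set.ncard_diff hssub (Set.toFinite _), Set.ncard_pair hne12]
      omega
    obtain ⟨T, hT1, hT2, hT3⟩ := ih (G.deleteEdges s) r hGood' hcard'
    have hTsub : ∀ t ∈ T, ({s(t.1,t.2.1), s(t.1,t.2.2)} : Set (Sym2 V)) ⊆ G.edgeSet \ s := by
      intro t ht
      rw [← hsE, ← hT3]
      exact Set.subset_biUnion_of_mem (u := fun t : V × V × V => ({s(t.1,t.2.1), s(t.1,t.2.2)} : Set (Sym2 V))) (show t ∈ (T : Set (V × V × V)) from ht)
    have hnotmem : (c, a, b) ∉ T := by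
      intro hmem
      have := hTsub _ hmem (Set.mem_insert _ _)
      exact this.2 (Or.inl rfl)
    refine ⟨insert (c, a, b) T, ?_, ?_, ?_⟩
    · intro t ht
      rcases Finset.mem_insert.mp ht with rfl | ht'
      · exact ⟨hab, hca, hcb⟩
      · obtain ⟨h1, h2', h3⟩ := hT1 t ht'
        exact ⟨h1, (G.deleteEdges_le s) h2', (G.deleteEdges_le s) h3⟩
    · intro t ht t' ht' htt'
      have hdisj_s : ∀ t₀ ∈ T, Disjoint s ({s(t₀.1,t₀.2.1), s(t₀.1,t₀.2.2)} : Set (Sym2 V)) := by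
        intro t₀ ht₀
        exact Set.disjoint_of_subset_right (hTsub t₀ ht₀) Set.disjoint_sdiff_right
      rcases Finset.mem_insert.mp ht with rfl | ht2 <;>
        rcases Finset.mem_insert.mp ht' with rfl | ht2'
      · exact absurd rfl htt'
      · exact hdisj_s _ ht2'
      · exact (hdisj_s _ ht2).symm
      · exact hT2 t ht2 t' ht2' htt'
    · rw [Finset.coe_insert, Set.biUnion_insert, hT3, hsE]
      exact Set.union_diff_cancel hssub

private def cherry (G : SimpleGraph V) (c a b : V) : G.Subgraph where
  verts := {c, a, b}
  Adj x y := G.Adj x y ∧ (s(x,y) = s(c,a) ∨ s(x,y) = s(c,b))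
  adj_sub h := h.1
  edge_vert := by
    rintro x y ⟨-, h' | h'⟩ <;> rcases Sym2.eq_iff.mp h' with ⟨rfl, rfl⟩ | ⟨rfl, rfl⟩ <;> simp
  symm := by
    constructor
    rintro x y ⟨h1, h2⟩
    exact ⟨h1.symm, by rwa [Sym2.eq_swap]⟩

private lemma cherry_edgeSet {G : SimpleGraph V} {c a b : V} (hca : G.Adj c a) (hcb : G.Adj c b) :
    (cherry G c a b).edgeSet = {s(c,a), s(c,b)} := by
  ext e
  induction e using Sym2.ind with
  | _ x y =>
    simp only [Subgraph.mem_edgeSet, cherry, Set.mem_insert_iff, Set.mem_singleton_iff]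
    constructor
    · rintro ⟨-, h⟩; exact h
    · rintro (h | h)
      · refine ⟨?_, Or.inl h⟩
        rcases Sym2.eq_iff.mp h with ⟨rfl, rfl⟩ | ⟨rfl, rfl⟩
        exacts [hca, hca.symm]
      · refine ⟨?_, Or.inr h⟩
        rcases Sym2.eq_iff.mp h with ⟨rfl, rfl⟩ | ⟨rfl, rfl⟩
        exacts [hcb, hcb.symm]

private lemma cherry_iso {G : SimpleGraph V} {c a b : V} (hca : G.Adj c a) (hcb : G.Adj c b)
    (hab : a ≠ b) : Nonempty ((cherry G c a b).coe ≃g pathGraph 3) := by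
  classical
  have hac : a ≠ c := hca.ne'
  have hbc : b ≠ c := hcb.ne'
  have hca' : c ≠ a := hca.ne
  have hcb' : c ≠ b := hcb.ne
  have hba : b ≠ a := hab.symm
  have hma : a ∈ (cherry G c a b).verts := by right; left; rfl
  have hmb : b ∈ (cherry G c a b).verts := by right; right; rfl
  have hmc : c ∈ (cherry G c a b).verts := by left; rfl
  refine ⟨⟨⟨fun x => if x.1 = a then 0 else if x.1 = c then 1 else 2,
    fun i => if i = 0 then ⟨a, hma⟩ else if i = 1 then ⟨c, hmc⟩ else ⟨b, hmb⟩, ?_, ?_⟩, ?_⟩⟩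
  · rintro ⟨x, hx⟩
    rcases hx with rfl | rfl | rfl <;> simp [hac, hbc, hca', hba]
  · intro i
    fin_cases i <;> simp [hac, hbc, hca', hba]
  · rintro ⟨x, hx⟩ ⟨y, hy⟩
    change (pathGraph 3).Adj (if x = a then 0 else if x = c then 1 else 2)
      (if y = a then 0 else if y = c then 1 else 2) ↔ _
    rcases hx with rfl | rfl | rfl <;> rcases hy with rfl | rfl | rfl <;>
      simp [pathGraph_adj, Sym2.eq_iff, cherry, hca, hcb, hca', hcb', hac, hbc, hab, hba,
        hca.symm, hcb.symm]

private lemma pg3_ncard : (pathGraph 3).edgeSet.ncard = 2 := by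
  have h : (pathGraph 3).edgeSet = {s((0:Fin 3),(1:Fin 3)), s((1:Fin 3),(2:Fin 3))} := by
    ext e
    induction e using Sym2.ind with
    | _ x y =>
      simp only [mem_edgeSet, pathGraph_adj, Set.mem_insert_iff, Set.mem_singleton_iff,
        Sym2.eq_iff]
      fin_cases x <;> fin_cases y <;> decide
  rw [h, Set.ncard_pair (by decide)]

private lemma even_biUnion {α : Type} (F : Finset (Set α))
    (hfin : ∀ s ∈ F, s.Finite)
    (hpair : ∀ s ∈ F, ∀ t ∈ F, s ≠ t → Disjoint s t)
    (h2 : ∀ s ∈ F, s.ncard = 2) : Even (⋃ s ∈ F, s).ncard := by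
  classical
  induction F using Finset.induction with
  | empty => simp
  | @insert a F ha ih =>
    rw [Finset.set_biUnion_insert]
    have hdisj : Disjoint a (⋃ s ∈ F, s) := by
      refine Set.disjoint_iUnion₂_right.mpr fun t ht => ?_
      refine hpair a (Finset.mem_insert_self _ _) t (Finset.mem_insert_of_mem ht) ?_
      rintro rfl; exact ha ht
    rw [Set.ncard_union_eq hdisj (hfin a (Finset.mem_insert_self _ _))
      (Set.Finite.biUnion F.finite_toSet fun s hs => hfin s (Finset.mem_insert_of_mem hs))]
    rw [h2 a (Finset.mem_insert_self _ _)]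
    exact even_two.add (ih (fun s hs => hfin s (Finset.mem_insert_of_mem hs))
      (fun s hs t ht => hpair s (Finset.mem_insert_of_mem hs) t (Finset.mem_insert_of_mem ht))
      (fun s hs => h2 s (Finset.mem_insert_of_mem hs)))
private lemma decomp_even [Fintype V] {G : SimpleGraph V} {D : Set G.Subgraph}
    (h : IsDecompInto G (pathGraph 3) D) : Even G.edgeSet.ncard := by
  classical
  obtain ⟨hiso, hdisj, hunion⟩ := h
  have hcard2 : ∀ H ∈ D, H.edgeSet.ncard = 2 := by
    intro H hH
    obtain ⟨φ⟩ := hiso H hH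
    have h1 : H.coe.edgeSet.ncard = (pathGraph 3).edgeSet.ncard := by
      rw [← Nat.card_coe_set_eq, ← Nat.card_coe_set_eq]
      exact Nat.card_congr φ.mapEdgeSet
    have h2' : H.edgeSet.ncard = H.coe.edgeSet.ncard := by
      rw [← SimpleGraph.Subgraph.image_coe_edgeSet_coe]
      exact Set.ncard_image_of_injective _ (Sym2.map.injective Subtype.val_injective)
    rw [h2', h1, pg3_ncard]
  have hSfin : (SimpleGraph.Subgraph.edgeSet '' D).Finite := Set.toFinite _
  have hU : (⋃ s ∈ hSfin.toFinset, s) = G.edgeSet := by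
    rw [← hunion]
    ext e
    simp only [Set.mem_iUnion, Set.Finite.mem_toFinset, Set.mem_image]
    constructor
    · rintro ⟨s, ⟨H, hH, rfl⟩, he⟩
      exact ⟨H, hH, he⟩
    · rintro ⟨H, hH, he⟩
      exact ⟨H.edgeSet, ⟨H, hH, rfl⟩, he⟩
  rw [← hU]
  apply even_biUnion
  · intro s _
    exact Set.toFinite s
  · intro s hs t ht hst
    obtain ⟨H, hH, rfl⟩ := hSfin.mem_toFinset.mp hs
    obtain ⟨K, hK, rfl⟩ := hSfin.mem_toFinset.mp ht
    exact hdisj H hH K hK (fun h => hst (congrArg _ h))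
  · intro s hs
    obtain ⟨H, hH, rfl⟩ := hSfin.mem_toFinset.mp hs
    exact hcard2 H hH

end Aux

/-- Kotzig: a connected finite simple graph admits a decomposition into paths of
length `2` if and only if it has an even number of edges. -/
theorem p2_decomposition_iff_even_edges
    {V : Type} [Fintype V] (G : SimpleGraph V) (hconn : G.Connected) :
    (∃ D : Set G.Subgraph, IsDecompInto G (pathGraph 3) D) ↔
      Even G.edgeSet.ncard := by
  constructor
  · rintro ⟨D, hD⟩
    exact decomp_even hD
  · rintro ⟨n, hn⟩
    obtain ⟨r⟩ := hconn.nonempty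
    have hGood : Good G r := fun x _ => hconn.preconnected r x
    obtain ⟨T, hT1, hT2, hT3⟩ := key n G r hGood (by omega)
    refine ⟨(fun t : V × V × V => cherry G t.1 t.2.1 t.2.2) '' (T : Set (V × V × V)),
      ?_, ?_, ?_⟩
    · rintro H ⟨t, ht, rfl⟩
      obtain ⟨h1, h2, h3⟩ := hT1 t ht
      exact cherry_iso h2 h3 h1
    · rintro H ⟨t, ht, rfl⟩ K ⟨t', ht', rfl⟩ hne
      obtain ⟨h1, h2, h3⟩ := hT1 t ht
      obtain ⟨h1', h2', h3'⟩ := hT1 t' ht'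
      rw [cherry_edgeSet h2 h3, cherry_edgeSet h2' h3']
      exact hT2 t ht t' ht' (fun h => hne (by rw [h]))
    · rw [Set.biUnion_image, ← hT3]
      refine Set.iUnion₂_congr fun t ht => ?_
      exact cherry_edgeSet (hT1 t ht).2.1 (hT1 t ht).2.2
end
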